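/- arXiv:2203.10011 — 5 statements merged into one kernel-verified Lean document; each statement's English description precedes it below -/
import Mathlib

section
/- Let $\mathcal{I}$ be a nonempty countable index set, $0 < p_0 \le p_1 \le \infty$, and $a = (a_i)_{i \in \mathcal{I}} \in \ell_{p_0}(\mathcal{I})$. Then for every finite subset $\Lambda \subseteq \mathcal{I}$ such that $|a_\lambda| \ge |a_i|$ for all $\lambda \in \Lambda$ and $i \in \mathcal{I} \setminus \Lambda$, one has $\left( \sum_{i \in \mathcal{I} \setminus \Lambda} |a_i|^{p_1} \right)^{1/p_1} \le (|\Lambda| + 1)^{-(1/p_0 - 1/p_1)} \left( \sum_{i \in \mathcal{I}} |a_i|^{p_0} \right)^{1/p_0}$ (with the usual modifications if $p_0$ or $p_1$ equal infinity). -/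
open MeasureTheory ENNReal

/-- Stechkin's inequality: approximation of an `ℓ_{p₀}` sequence by its largest entries.
`eLpNorm · p Measure.count` is the `ℓ_p` (quasi-)norm, with the usual sup-modification
for `p = ∞`. -/
theorem stechkin_inequality {I : Type*} [Countable I] [Nonempty I] [DecidableEq I]
    [MeasurableSpace I] [MeasurableSingletonClass I]
    (p₀ p₁ : ℝ≥0∞) (hp₀ : 0 < p₀) (hp : p₀ ≤ p₁)
    (a : I → ℂ) (ha : eLpNorm a p₀ Measure.count < ⊤)
    (Λ : Finset I)
    (hΛ : ∀ l ∈ Λ, ∀ i, i ∉ Λ → ‖a i‖ ≤ ‖a l‖) :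
    eLpNorm (fun i => if i ∈ Λ then 0 else a i) p₁ Measure.count ≤
      ENNReal.ofReal (((Λ.card : ℝ) + 1) ^ (-(1 / p₀.toReal - 1 / p₁.toReal))) *
        eLpNorm a p₀ Measure.count := by
  classical
  set b : I → ℂ := fun i => if i ∈ Λ then 0 else a i with hb
  set N : ℝ≥0∞ := (Λ.card : ℝ≥0∞) + 1 with hNdef
  have hN0 : N ≠ 0 := by simp [hNdef]
  have hNtop : N ≠ ⊤ := by simp [hNdef]
  have hconst : ∀ e : ℝ, ENNReal.ofReal (((Λ.card : ℝ) + 1) ^ e) = N ^ e := by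
    intro e
    rw [← ENNReal.ofReal_rpow_of_pos (by positivity)]
    congr 1
    rw [ENNReal.ofReal_add (by positivity) zero_le_one, ENNReal.ofReal_natCast,
      ENNReal.ofReal_one]
  -- pointwise norm comparison between `b` and `a`
  have hba : ∀ i, ‖b i‖₊ ≤ ‖a i‖₊ := by
    intro i
    by_cases h : i ∈ Λ <;> simp [hb, h]
  rcases eq_or_ne p₀ ⊤ with h0 | h0
  · -- p₀ = ∞ forces p₁ = ∞ and constant 1
    have h1 : p₁ = ⊤ := top_le_iff.mp (h0 ▸ hp)
    subst h0 h1
    have : -(1 / (⊤ : ℝ≥0∞).toReal - 1 / (⊤ : ℝ≥0∞).toReal) = (0 : ℝ) := by simp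
    rw [this, hconst 0, ENNReal.rpow_zero, one_mul,
      eLpNorm_exponent_top, eLpNorm_exponent_top, eLpNormEssSup_count, eLpNormEssSup_count]
    exact iSup_mono fun i => by rw [enorm_eq_nnnorm, enorm_eq_nnnorm]; exact_mod_cast hba i
  -- now p₀ is finite
  set q₀ : ℝ := p₀.toReal with hq₀def
  have hq₀ : 0 < q₀ := ENNReal.toReal_pos hp₀.ne' h0
  set S : ℝ≥0∞ := ∑' i, (‖a i‖₊ : ℝ≥0∞) ^ q₀ with hSdef
  have hSnorm : eLpNorm a p₀ Measure.count = S ^ (1 / q₀) := by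
    simp only [eLpNorm_eq_lintegral_rpow_enorm_toReal hp₀.ne' h0, lintegral_count, enorm_eq_nnnorm]; rfl
  have hStop : S ≠ ⊤ := by
    intro hS
    rw [hSnorm, hS, ENNReal.top_rpow_of_pos (by positivity)] at ha
    exact (lt_irrefl _ ha).elim
  -- the key pointwise bound on the complement of Λ
  have hkey : ∀ i, i ∉ Λ → (‖a i‖₊ : ℝ≥0∞) ≤ (S / N) ^ (1 / q₀) := by
    intro i hi
    have hmul : N * (‖a i‖₊ : ℝ≥0∞) ^ q₀ ≤ S := by
      have hsum : ∑ j ∈ insert i Λ, (‖a j‖₊ : ℝ≥0∞) ^ q₀ ≤ S :=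
        ENNReal.sum_le_tsum _
      rw [Finset.sum_insert hi] at hsum
      have hcard : (Λ.card : ℝ≥0∞) * (‖a i‖₊ : ℝ≥0∞) ^ q₀ ≤
          ∑ l ∈ Λ, (‖a l‖₊ : ℝ≥0∞) ^ q₀ := by
        have : (Λ.card : ℝ≥0∞) * (‖a i‖₊ : ℝ≥0∞) ^ q₀ =
            ∑ _l ∈ Λ, (‖a i‖₊ : ℝ≥0∞) ^ q₀ := by
          rw [Finset.sum_const, nsmul_eq_mul]
        rw [this]
        apply Finset.sum_le_sum
        intro l hl
        apply ENNReal.rpow_le_rpow _ hq₀.le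
        have := hΛ l hl i hi
        rw [← coe_nnnorm, ← coe_nnnorm,
          NNReal.coe_le_coe] at this
        exact_mod_cast this
      calc N * (‖a i‖₊ : ℝ≥0∞) ^ q₀
          = (‖a i‖₊ : ℝ≥0∞) ^ q₀ + (Λ.card : ℝ≥0∞) * (‖a i‖₊ : ℝ≥0∞) ^ q₀ := by
            rw [hNdef]; ring
        _ ≤ (‖a i‖₊ : ℝ≥0∞) ^ q₀ + ∑ l ∈ Λ, (‖a l‖₊ : ℝ≥0∞) ^ q₀ :=
            add_le_add le_rfl hcard
        _ ≤ S := hsum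
    have hdiv : (‖a i‖₊ : ℝ≥0∞) ^ q₀ ≤ S / N := by
      rw [ENNReal.le_div_iff_mul_le (Or.inl hN0) (Or.inl hNtop), mul_comm]
      exact hmul
    calc (‖a i‖₊ : ℝ≥0∞) = ((‖a i‖₊ : ℝ≥0∞) ^ q₀) ^ (1 / q₀) := by
          rw [← ENNReal.rpow_mul, mul_one_div, div_self hq₀.ne', ENNReal.rpow_one]
      _ ≤ (S / N) ^ (1 / q₀) := ENNReal.rpow_le_rpow hdiv (by positivity)
  -- dispose of the trivial case S = 0 (i.e. a ≡ 0)
  rcases eq_or_ne S 0 with hS0 | hS0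
  · have hazero : ∀ i, a i = 0 := by
      intro i
      have h1 : (‖a i‖₊ : ℝ≥0∞) ^ q₀ = 0 :=
        le_antisymm (hS0 ▸ ENNReal.le_tsum i) zero_le
      rw [ENNReal.rpow_eq_zero_iff] at h1
      rcases h1 with ⟨h1, _⟩ | ⟨h1, h2⟩
      · simpa using h1
      · exact absurd h1 (by simp)
    have hbzero : b = fun _ => (0 : ℂ) := by
      funext i; by_cases h : i ∈ Λ <;> simp [hb, h, hazero i]
    rw [hbzero]
    simpa using (zero_le _ : (0 : ℝ≥0∞) ≤ _)
  rcases eq_or_ne p₁ ⊤ with h1 | h1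
  · -- p₁ = ∞
    subst h1
    rw [eLpNorm_exponent_top, eLpNormEssSup_count, hSnorm]
    have hsup : ⨆ i, (‖b i‖₊ : ℝ≥0∞) ≤ (S / N) ^ (1 / q₀) := by
      apply iSup_le
      intro i
      by_cases h : i ∈ Λ
      · simp [hb, h]
      · simpa [hb, h] using hkey i h
    refine hsup.trans (le_of_eq ?_)
    have he : -(1 / q₀ - 1 / (⊤ : ℝ≥0∞).toReal) = -(1 / q₀) := by simp
    rw [he, hconst, ENNReal.div_rpow_of_nonneg _ _ (by positivity),
      ENNReal.rpow_neg, ENNReal.div_eq_inv_mul]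
  -- main case : both finite
  set q₁ : ℝ := p₁.toReal with hq₁def
  have hp₁0 : (0 : ℝ≥0∞) < p₁ := lt_of_lt_of_le hp₀ hp
  have hq₁ : 0 < q₁ := ENNReal.toReal_pos hp₁0.ne' h1
  have hq₀₁ : q₀ ≤ q₁ := ENNReal.toReal_mono h1 hp
  set M : ℝ≥0∞ := (S / N) ^ (1 / q₀) with hMdef
  have hT : eLpNorm b p₁ Measure.count = (∑' i, (‖b i‖₊ : ℝ≥0∞) ^ q₁) ^ (1 / q₁) := by
    simp only [eLpNorm_eq_lintegral_rpow_enorm_toReal hp₁0.ne' h1, lintegral_count, enorm_eq_nnnorm]; rfl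
  have hterm : ∀ i, (‖b i‖₊ : ℝ≥0∞) ^ q₁ ≤ (‖a i‖₊ : ℝ≥0∞) ^ q₀ * M ^ (q₁ - q₀) := by
    intro i
    by_cases h : i ∈ Λ
    · simp [hb, h, ENNReal.zero_rpow_of_pos hq₁]
    · have hbi : b i = a i := by simp [hb, h]
      rw [hbi]
      set x : ℝ≥0∞ := (‖a i‖₊ : ℝ≥0∞) with hx
      rcases eq_or_ne x 0 with hx0 | hx0
      · rw [hx0, ENNReal.zero_rpow_of_pos hq₁]; exact zero_le
      · have hxt : x ≠ ⊤ := by simp [hx]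
        have : x ^ q₁ = x ^ q₀ * x ^ (q₁ - q₀) := by
          rw [← ENNReal.rpow_add _ _ hx0 hxt]; ring_nf
        rw [this]
        exact mul_le_mul_right (ENNReal.rpow_le_rpow (hkey i h) (by linarith)) _
  have hTle : (∑' i, (‖b i‖₊ : ℝ≥0∞) ^ q₁) ≤ S * M ^ (q₁ - q₀) := by
    calc (∑' i, (‖b i‖₊ : ℝ≥0∞) ^ q₁)
        ≤ ∑' i, (‖a i‖₊ : ℝ≥0∞) ^ q₀ * M ^ (q₁ - q₀) := ENNReal.tsum_le_tsum hterm
      _ = S * M ^ (q₁ - q₀) := by rw [ENNReal.tsum_mul_right]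
  rw [hT, hSnorm]
  calc (∑' i, (‖b i‖₊ : ℝ≥0∞) ^ q₁) ^ (1 / q₁)
      ≤ (S * M ^ (q₁ - q₀)) ^ (1 / q₁) := ENNReal.rpow_le_rpow hTle (div_nonneg zero_le_one hq₁.le)
    _ = ENNReal.ofReal (((Λ.card : ℝ) + 1) ^ (-(1 / q₀ - 1 / q₁))) * S ^ (1 / q₀) := by
        rw [hconst]
        rw [ENNReal.mul_rpow_of_nonneg _ _ (by positivity), hMdef,
          ← ENNReal.rpow_mul, ← ENNReal.rpow_mul,
          ENNReal.div_rpow_of_nonneg _ _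
            (mul_nonneg (div_nonneg zero_le_one hq₀.le)
              (mul_nonneg (by linarith) (div_nonneg zero_le_one hq₁.le))),
          ENNReal.div_eq_inv_mul, ← ENNReal.rpow_neg]
        have he : 1 / q₀ * ((q₁ - q₀) * (1 / q₁)) = 1 / q₀ - 1 / q₁ := by
          field_simp
        rw [he, mul_comm (S ^ (1/q₁)), mul_assoc, ← ENNReal.rpow_add _ _ hS0 hStop]
        congr 2
        field_simp
        ring
end

section
/- Let $d \in \mathbb{N}$, $\alpha > \beta > 0$, and $\delta > 0$. Define $\Delta_\mu := \{ j \in \mathbb{N}_0^d : \alpha |j|_1 - \beta |j|_\infty \le \mu \}$ for $\mu \in \mathbb{N}_0$, where $|j|_1 = j_1 + \cdots + j_d$ and $|j|_\infty = \max_i j_i$. Then there exist constants $c, C > 0$ (depending only on $d, \alpha, \beta, \delta$) such that for all $\mu \ge \alpha - \beta$: $c\, 2^{\delta \mu/(\alpha - \beta)} \le \sum_{j \in \Delta_\mu} 2^{\delta |j|_1} \le C\, 2^{\delta \mu/(\alpha - \beta)}$. -/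
open scoped ENNReal

private lemma rpow_finset_sum' {ι : Type*} (s : Finset ι) (f : ι → ℝ) :
    (2 : ℝ≥0∞) ^ (∑ l ∈ s, f l) = ∏ l ∈ s, (2 : ℝ≥0∞) ^ (f l) := by
  classical
  induction s using Finset.cons_induction with
  | empty => simp
  | cons a s ha ih =>
      rw [Finset.sum_cons, Finset.prod_cons, ENNReal.rpow_add _ _ two_ne_zero ENNReal.ofNat_ne_top,
        ih]

private lemma geom_tail' (δ : ℝ) (hδ : 0 < δ) (M : ℝ) :
    ∑' m : ℕ, (if (m : ℝ) ≤ M then (2 : ℝ≥0∞) ^ (δ * m) else 0) ≤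
      (1 - (2 : ℝ≥0∞) ^ (-δ))⁻¹ * (2 : ℝ≥0∞) ^ (δ * M) := by
  rcases lt_or_ge M 0 with hM | hM
  · have h0 : ∀ m : ℕ, (if (m : ℝ) ≤ M then (2 : ℝ≥0∞) ^ (δ * m) else 0) = 0 := fun m => by
      rw [if_neg]; push_neg; exact lt_of_lt_of_le hM (Nat.cast_nonneg m)
    simp [h0]
  · set K := ⌊M⌋₊ with hK
    have hKM : (K : ℝ) ≤ M := Nat.floor_le hM
    have hsum : ∑' m : ℕ, (if (m : ℝ) ≤ M then (2 : ℝ≥0∞) ^ (δ * m) else 0)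
        = ∑ m ∈ Finset.range (K + 1), (if (m : ℝ) ≤ M then (2 : ℝ≥0∞) ^ (δ * m) else 0) := by
      refine tsum_eq_sum (fun m hm => ?_)
      rw [if_neg]
      push_neg
      have h1 : K + 1 ≤ m := by simpa [Finset.mem_range] using hm
      calc M < K + 1 := Nat.lt_floor_add_one M
        _ ≤ (m : ℝ) := by exact_mod_cast Nat.cast_le.2 h1
    rw [hsum]
    have hterm : ∀ m ∈ Finset.range (K + 1),
        (if (m : ℝ) ≤ M then (2 : ℝ≥0∞) ^ (δ * m) else 0) ≤
          (2 : ℝ≥0∞) ^ (δ * M) * ((2 : ℝ≥0∞) ^ (-δ)) ^ (K - m) := by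
      intro m hm
      have hmK : m ≤ K := Nat.lt_succ_iff.mp (Finset.mem_range.mp hm)
      have hcast : (m : ℝ) + ((K - m : ℕ) : ℝ) = K := by
        rw [Nat.cast_sub hmK]; ring
      split_ifs with h
      · have hexp : δ * m ≤ δ * M + (-δ) * ((K - m : ℕ) : ℝ) := by
          have : (m : ℝ) + ((K - m : ℕ) : ℝ) ≤ M := hcast ▸ hKM
          nlinarith [hδ.le]
        calc (2 : ℝ≥0∞) ^ (δ * m) ≤ (2 : ℝ≥0∞) ^ (δ * M + (-δ) * ((K - m : ℕ) : ℝ)) :=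
              ENNReal.rpow_le_rpow_of_exponent_le one_le_two hexp
          _ = (2 : ℝ≥0∞) ^ (δ * M) * ((2 : ℝ≥0∞) ^ (-δ)) ^ (K - m) := by
              rw [ENNReal.rpow_add _ _ two_ne_zero ENNReal.ofNat_ne_top, ← ENNReal.rpow_natCast
                ((2:ℝ≥0∞) ^ (-δ)), ← ENNReal.rpow_mul]
      · exact zero_le
    calc ∑ m ∈ Finset.range (K + 1), (if (m : ℝ) ≤ M then (2 : ℝ≥0∞) ^ (δ * m) else 0)
        ≤ ∑ m ∈ Finset.range (K + 1), (2 : ℝ≥0∞) ^ (δ * M) * ((2 : ℝ≥0∞) ^ (-δ)) ^ (K - m) :=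
          Finset.sum_le_sum hterm
      _ = (2 : ℝ≥0∞) ^ (δ * M) * ∑ m ∈ Finset.range (K + 1), ((2 : ℝ≥0∞) ^ (-δ)) ^ (K - m) := by
          rw [Finset.mul_sum]
      _ ≤ (2 : ℝ≥0∞) ^ (δ * M) * (1 - (2 : ℝ≥0∞) ^ (-δ))⁻¹ := by
          refine mul_le_mul_right ?_ _
          have hreflect : ∑ m ∈ Finset.range (K + 1), ((2 : ℝ≥0∞) ^ (-δ)) ^ (K - m)
              = ∑ t ∈ Finset.range (K + 1), ((2 : ℝ≥0∞) ^ (-δ)) ^ t := by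
            rw [← Finset.sum_range_reflect]
            refine Finset.sum_congr rfl fun x hx => ?_
            congr 1
            have hx' : x ≤ K := Nat.lt_succ_iff.mp (Finset.mem_range.mp hx)
            omega
          rw [hreflect, ← ENNReal.tsum_geometric]
          exact ENNReal.sum_le_tsum _
      _ = (1 - (2 : ℝ≥0∞) ^ (-δ))⁻¹ * (2 : ℝ≥0∞) ^ (δ * M) := mul_comm _ _

private lemma tsum_pi_fin' (x : ℝ≥0∞) : ∀ n : ℕ,
    ∑' k : Fin n → ℕ, ∏ l, x ^ k l = ((1 - x)⁻¹) ^ n := by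
  intro n
  induction n with
  | zero =>
      simp [tsum_eq_single (fun i : Fin 0 => (0:ℕ))
        (fun b hb => absurd (Subsingleton.elim b _) hb)]
  | succ n ih =>
      rw [← Equiv.tsum_eq (Fin.consEquiv (fun _ : Fin (n+1) => ℕ)) (fun k => ∏ l, x ^ k l)]
      have h : ∀ p : ℕ × (Fin n → ℕ),
          (∏ l, x ^ ((Fin.consEquiv (fun _ : Fin (n+1) => ℕ)) p) l) = x ^ p.1 * ∏ l, x ^ p.2 l := by
        intro p
        rw [Fin.prod_univ_succ]
        simp [Fin.consEquiv]
      simp only [h]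
      rw [ENNReal.tsum_prod']
      simp only [ENNReal.tsum_mul_left, ENNReal.tsum_mul_right]
      rw [ih, ENNReal.tsum_geometric, pow_succ, mul_comm]

private lemma tsum_pi_card' (ι : Type*) [Fintype ι] (x : ℝ≥0∞) :
    ∑' k : ι → ℕ, ∏ l, x ^ k l = ((1 - x)⁻¹) ^ (Fintype.card ι) := by
  classical
  let φ := Fintype.equivFin ι
  let e : (Fin (Fintype.card ι) → ℕ) ≃ (ι → ℕ) := Equiv.arrowCongr φ.symm (Equiv.refl ℕ)
  rw [← Equiv.tsum_eq e (fun k => ∏ l, x ^ k l), ← tsum_pi_fin' x (Fintype.card ι)]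
  refine tsum_congr fun k => ?_
  have h : ∀ l : ι, (e k) l = k (φ l) := fun l => by
    simp [e, Equiv.arrowCongr, φ]
  simp only [h]
  exact Equiv.prod_comp φ (fun m => x ^ k m)

private lemma counting_lower (d : ℕ) (hd : 0 < d) (α β δ : ℝ) (hαβ : β < α)
    (hδ : 0 < δ) (μ : ℕ) :
      ENNReal.ofReal ((2:ℝ) ^ (-δ)) * (2 : ℝ≥0∞) ^ (δ * (μ : ℝ) / (α - β)) ≤
        (∑' j : Fin d → ℕ,
          Set.indicator
            {j : Fin d → ℕ |
              α * (∑ i, (j i : ℝ)) - β * ((Finset.univ.sup j : ℕ) : ℝ) ≤ (μ : ℝ)}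
            (fun j => (2 : ℝ≥0∞) ^ (δ * ∑ i, (j i : ℝ))) j) := by
  have hab : (0:ℝ) < α - β := sub_pos.2 hαβ
  set m := ⌊(μ : ℝ) / (α - β)⌋₊ with hm
  set j0 : Fin d → ℕ := fun l => if l = (⟨0, hd⟩ : Fin d) then m else 0 with hj0
  have hsumj0 : (∑ i, (j0 i : ℝ)) = (m : ℝ) := by
    rw [← Nat.cast_sum]
    congr 1
    simp [hj0, Finset.sum_ite_eq']
  have hsup : Finset.univ.sup j0 = m := by
    apply le_antisymm
    · refine Finset.sup_le fun i _ => ?_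
      by_cases h : i = (⟨0, hd⟩ : Fin d) <;> simp [hj0, h]
    · have := Finset.le_sup (f := j0) (Finset.mem_univ (⟨0, hd⟩ : Fin d))
      simpa [hj0] using this
  have hmle : (m : ℝ) ≤ (μ : ℝ) / (α - β) := Nat.floor_le (by positivity)
  have hmem : j0 ∈ {j : Fin d → ℕ |
      α * (∑ i, (j i : ℝ)) - β * ((Finset.univ.sup j : ℕ) : ℝ) ≤ (μ : ℝ)} := by
    simp only [Set.mem_setOf_eq, hsumj0, hsup]
    have : (α - β) * (m : ℝ) ≤ (μ : ℝ) := by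
      rw [← le_div_iff₀' hab]; exact hmle
    nlinarith
  have hle : ENNReal.ofReal ((2:ℝ) ^ (-δ)) * (2 : ℝ≥0∞) ^ (δ * (μ : ℝ) / (α - β)) ≤
      (2 : ℝ≥0∞) ^ (δ * ∑ i, (j0 i : ℝ)) := by
    rw [hsumj0, ← ENNReal.ofReal_rpow_of_pos two_pos, ENNReal.ofReal_ofNat]
    rw [← ENNReal.rpow_add _ _ two_ne_zero ENNReal.ofNat_ne_top]
    refine ENNReal.rpow_le_rpow_of_exponent_le one_le_two ?_
    have hfl : (μ : ℝ) / (α - β) - 1 < (m : ℝ) := Nat.sub_one_lt_floor _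
    have h : δ * (μ : ℝ) / (α - β) = δ * ((μ:ℝ) / (α - β)) := by ring
    rw [h]
    nlinarith
  calc ENNReal.ofReal ((2:ℝ) ^ (-δ)) * (2 : ℝ≥0∞) ^ (δ * (μ : ℝ) / (α - β))
      ≤ (2 : ℝ≥0∞) ^ (δ * ∑ i, (j0 i : ℝ)) := hle
    _ = Set.indicator _ (fun j => (2 : ℝ≥0∞) ^ (δ * ∑ i, (j i : ℝ))) j0 := by
        rw [Set.indicator_of_mem hmem]
    _ ≤ _ := ENNReal.le_tsum j0

private lemma counting_upper (d : ℕ) (hd : 0 < d) (α β δ : ℝ) (hαβ : β < α)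
    (hδ : 0 < δ) (μ : ℕ) :
    (∑' j : Fin d → ℕ,
          Set.indicator
            {j : Fin d → ℕ |
              α * (∑ i, (j i : ℝ)) - β * ((Finset.univ.sup j : ℕ) : ℝ) ≤ (μ : ℝ)}
            (fun j => (2 : ℝ≥0∞) ^ (δ * ∑ i, (j i : ℝ))) j) ≤
      ((d : ℝ≥0∞) * ((1 - (2 : ℝ≥0∞) ^ (-δ))⁻¹ *
        ((1 - (2 : ℝ≥0∞) ^ (-(δ * β / (α - β))))⁻¹) ^ (d - 1)))
        * (2 : ℝ≥0∞) ^ (δ * (μ : ℝ) / (α - β)) := by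
  classical
  have hab : (0 : ℝ) < α - β := sub_pos.2 hαβ
  set ε : ℝ := δ * β / (α - β) with hε
  set A : ℝ := δ * (μ : ℝ) / (α - β) with hA
  set C1 : ℝ≥0∞ := (1 - (2 : ℝ≥0∞) ^ (-δ))⁻¹ with hC1
  set P : ℝ≥0∞ := ((1 - (2 : ℝ≥0∞) ^ (-ε))⁻¹) ^ (d - 1) with hP
  set F : Fin d → (Fin d → ℕ) → ℝ≥0∞ := fun i j =>
    if α * (∑ l, (j l : ℝ)) - β * (j i : ℝ) ≤ (μ : ℝ) then
      (2 : ℝ≥0∞) ^ (δ * ∑ l, (j l : ℝ)) else 0 with hF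
  have hne : Nonempty (Fin d) := Fin.pos_iff_nonempty.mp hd
  have step1 : (∑' j : Fin d → ℕ,
          Set.indicator
            {j : Fin d → ℕ |
              α * (∑ i, (j i : ℝ)) - β * ((Finset.univ.sup j : ℕ) : ℝ) ≤ (μ : ℝ)}
            (fun j => (2 : ℝ≥0∞) ^ (δ * ∑ i, (j i : ℝ))) j) ≤
      ∑ i : Fin d, ∑' j : Fin d → ℕ, F i j := by
    rw [← Summable.tsum_finsetSum (fun i _ => ENNReal.summable)]
    refine ENNReal.tsum_le_tsum fun j => ?_
    rw [Set.indicator_apply]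
    split_ifs with hj
    · obtain ⟨i, -, hi⟩ := Finset.exists_mem_eq_sup Finset.univ Finset.univ_nonempty j
      have hFi : F i j = (2 : ℝ≥0∞) ^ (δ * ∑ l, (j l : ℝ)) := by
        rw [hF]
        dsimp only
        rw [if_pos]
        rw [← hi]
        exact hj
      calc (2 : ℝ≥0∞) ^ (δ * ∑ l, (j l : ℝ)) = F i j := hFi.symm
        _ ≤ ∑ i : Fin d, F i j :=
          Finset.single_le_sum (f := fun i => F i j) (fun _ _ => zero_le) (Finset.mem_univ i)
    · exact zero_le
  have key : ∀ i : Fin d, (∑' j : Fin d → ℕ, F i j) ≤ C1 * P * (2 : ℝ≥0∞) ^ A := by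
    intro i
    set e := Equiv.funSplitAt i ℕ with he
    have happ : ∀ (p : ℕ × ({l : Fin d // l ≠ i} → ℕ)) (l : Fin d),
        e.symm p l = if h : l = i then p.1 else p.2 ⟨l, h⟩ := fun p l =>
      Equiv.funSplitAt_symm_apply i ℕ p l
    have happ_i : ∀ p : ℕ × ({l : Fin d // l ≠ i} → ℕ), e.symm p i = p.1 := fun p => by
      rw [happ p i, dif_pos rfl]
    have hsplit : ∀ p : ℕ × ({l : Fin d // l ≠ i} → ℕ),
        (∑ l, ((e.symm p) l : ℝ)) = (p.1 : ℝ) + ∑ l' : {l : Fin d // l ≠ i}, (p.2 l' : ℝ) := by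
      intro p
      rw [Fintype.sum_eq_add_sum_compl i]
      congr 1
      · rw [happ_i p]
      · rw [Finset.sum_subtype (p := fun l => l ≠ i) ({i}ᶜ : Finset (Fin d))
          (fun x => by simp) (fun l => ((e.symm p l : ℕ) : ℝ))]
        refine Finset.sum_congr rfl fun l' _ => ?_
        rw [happ p l', dif_neg l'.2]
    have hTi : (∑' j : Fin d → ℕ, F i j)
        = ∑' k : {l : Fin d // l ≠ i} → ℕ, ∑' m : ℕ, F i (e.symm (m, k)) := by
      rw [← Equiv.tsum_eq e.symm (fun j => F i j), ENNReal.tsum_prod', ENNReal.tsum_comm]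
    rw [hTi]
    have inner_le : ∀ k : {l : Fin d // l ≠ i} → ℕ,
        (∑' m : ℕ, F i (e.symm (m, k))) ≤
          C1 * ((2 : ℝ≥0∞) ^ A * (2 : ℝ≥0∞) ^ ((-ε) * ∑ l', (k l' : ℝ))) := by
      intro k
      set s : ℝ := ∑ l' : {l : Fin d // l ≠ i}, (k l' : ℝ) with hs
      have hs0 : 0 ≤ s := Finset.sum_nonneg fun l' _ => Nat.cast_nonneg _
      set M : ℝ := ((μ : ℝ) - α * s) / (α - β) with hM
      have hFm : ∀ m : ℕ, F i (e.symm (m, k)) =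
          (2 : ℝ≥0∞) ^ (δ * s) * (if (m : ℝ) ≤ M then (2 : ℝ≥0∞) ^ (δ * m) else 0) := by
        intro m
        rw [hF]
        dsimp only
        rw [hsplit (m, k), happ_i (m, k)]
        have hcond : (α * ((m : ℝ) + s) - β * (m : ℝ) ≤ (μ : ℝ)) ↔ ((m : ℝ) ≤ M) := by
          rw [hM, le_div_iff₀ hab]
          constructor <;> intro h <;> nlinarith
        rw [if_congr hcond rfl rfl, mul_ite, mul_zero]
        congr 1
        rw [← ENNReal.rpow_add _ _ two_ne_zero ENNReal.ofNat_ne_top]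
        ring_nf
        rfl
      calc (∑' m : ℕ, F i (e.symm (m, k)))
          = (2 : ℝ≥0∞) ^ (δ * s) *
            ∑' m : ℕ, (if (m : ℝ) ≤ M then (2 : ℝ≥0∞) ^ (δ * m) else 0) := by
            rw [← ENNReal.tsum_mul_left]; exact tsum_congr hFm
        _ ≤ (2 : ℝ≥0∞) ^ (δ * s) * (C1 * (2 : ℝ≥0∞) ^ (δ * M)) :=
            mul_le_mul_right (geom_tail' δ hδ M) _
        _ = C1 * ((2 : ℝ≥0∞) ^ A * (2 : ℝ≥0∞) ^ ((-ε) * s)) := by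
            rw [mul_left_comm]
            congr 1
            rw [← ENNReal.rpow_add _ _ two_ne_zero ENNReal.ofNat_ne_top,
              ← ENNReal.rpow_add _ _ two_ne_zero ENNReal.ofNat_ne_top]
            congr 1
            rw [hM, hA, hε]
            field_simp
            ring
    have hprod : ∀ k : {l : Fin d // l ≠ i} → ℕ,
        (2 : ℝ≥0∞) ^ ((-ε) * ∑ l', (k l' : ℝ)) = ∏ l', ((2 : ℝ≥0∞) ^ (-ε)) ^ (k l') := by
      intro k
      rw [Finset.mul_sum, rpow_finset_sum']
      refine Finset.prod_congr rfl fun l' _ => ?_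
      rw [ENNReal.rpow_mul, ENNReal.rpow_natCast]
    have hcard : Fintype.card {l : Fin d // l ≠ i} = d - 1 := by
      simp [Fintype.card_subtype_compl]
    calc (∑' k : {l : Fin d // l ≠ i} → ℕ, ∑' m : ℕ, F i (e.symm (m, k)))
        ≤ ∑' k : {l : Fin d // l ≠ i} → ℕ,
            C1 * ((2 : ℝ≥0∞) ^ A * (2 : ℝ≥0∞) ^ ((-ε) * ∑ l', (k l' : ℝ))) :=
          ENNReal.tsum_le_tsum inner_le
      _ = C1 * ((2 : ℝ≥0∞) ^ A *
            ∑' k : {l : Fin d // l ≠ i} → ℕ, (2 : ℝ≥0∞) ^ ((-ε) * ∑ l', (k l' : ℝ))) := by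
          rw [ENNReal.tsum_mul_left, ENNReal.tsum_mul_left]
      _ = C1 * ((2 : ℝ≥0∞) ^ A * P) := by
          congr 2
          rw [tsum_congr hprod, tsum_pi_card', hcard, hP]
      _ = C1 * P * (2 : ℝ≥0∞) ^ A := by ring
  calc (∑' j : Fin d → ℕ,
          Set.indicator
            {j : Fin d → ℕ |
              α * (∑ i, (j i : ℝ)) - β * ((Finset.univ.sup j : ℕ) : ℝ) ≤ (μ : ℝ)}
            (fun j => (2 : ℝ≥0∞) ^ (δ * ∑ i, (j i : ℝ))) j)
      ≤ ∑ i : Fin d, ∑' j : Fin d → ℕ, F i j := step1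
    _ ≤ ∑ _i : Fin d, C1 * P * (2 : ℝ≥0∞) ^ A := Finset.sum_le_sum fun i _ => key i
    _ = (d : ℝ≥0∞) * (C1 * P * (2 : ℝ≥0∞) ^ A) := by
        rw [Finset.sum_const, Finset.card_univ, Fintype.card_fin, nsmul_eq_mul]
    _ = ((d : ℝ≥0∞) * (C1 * P)) * (2 : ℝ≥0∞) ^ A := by ring

/-- Counting lemma: for `α > β > 0` and `δ > 0`, the weighted sum
`∑_{j ∈ Δ_μ} 2^{δ|j|₁}` over the anisotropic index set
`Δ_μ = { j ∈ ℕ₀^d : α|j|₁ - β|j|∞ ≤ μ }` is `∼ 2^{δμ/(α-β)}` for `μ ≥ α - β`. -/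
theorem counting_lemma (d : ℕ) (hd : 0 < d) (α β δ : ℝ) (hβ : 0 < β) (hαβ : β < α)
    (hδ : 0 < δ) :
    ∃ c C : ℝ, 0 < c ∧ 0 < C ∧ ∀ μ : ℕ, α - β ≤ (μ : ℝ) →
      ENNReal.ofReal c * (2 : ℝ≥0∞) ^ (δ * (μ : ℝ) / (α - β)) ≤
        (∑' j : Fin d → ℕ,
          Set.indicator
            {j : Fin d → ℕ |
              α * (∑ i, (j i : ℝ)) - β * ((Finset.univ.sup j : ℕ) : ℝ) ≤ (μ : ℝ)}
            (fun j => (2 : ℝ≥0∞) ^ (δ * ∑ i, (j i : ℝ))) j) ∧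
      (∑' j : Fin d → ℕ,
          Set.indicator
            {j : Fin d → ℕ |
              α * (∑ i, (j i : ℝ)) - β * ((Finset.univ.sup j : ℕ) : ℝ) ≤ (μ : ℝ)}
            (fun j => (2 : ℝ≥0∞) ^ (δ * ∑ i, (j i : ℝ))) j) ≤
        ENNReal.ofReal C * (2 : ℝ≥0∞) ^ (δ * (μ : ℝ) / (α - β)) := by
  have hab : (0 : ℝ) < α - β := sub_pos.2 hαβ
  have hεpos : 0 < δ * β / (α - β) := by positivity
  set E : ℝ≥0∞ := (d : ℝ≥0∞) * ((1 - (2 : ℝ≥0∞) ^ (-δ))⁻¹ *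
      ((1 - (2 : ℝ≥0∞) ^ (-(δ * β / (α - β))))⁻¹) ^ (d - 1)) with hE
  have hlt1 : (2 : ℝ≥0∞) ^ (-δ) < 1 :=
    ENNReal.rpow_lt_one_of_one_lt_of_neg ENNReal.one_lt_two (neg_lt_zero.2 hδ)
  have hlt2 : (2 : ℝ≥0∞) ^ (-(δ * β / (α - β))) < 1 :=
    ENNReal.rpow_lt_one_of_one_lt_of_neg ENNReal.one_lt_two (neg_lt_zero.2 hεpos)
  have hC1top : ((1 - (2 : ℝ≥0∞) ^ (-δ))⁻¹ : ℝ≥0∞) ≠ ⊤ :=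
    ENNReal.inv_ne_top.2 (fun h => (not_le.2 hlt1) (tsub_eq_zero_iff_le.mp h))
  have hPtop : (((1 - (2 : ℝ≥0∞) ^ (-(δ * β / (α - β))))⁻¹) ^ (d - 1) : ℝ≥0∞) ≠ ⊤ :=
    ENNReal.pow_ne_top (ENNReal.inv_ne_top.2 (fun h => (not_le.2 hlt2) (tsub_eq_zero_iff_le.mp h)))
  have hEtop : E ≠ ⊤ :=
    ENNReal.mul_ne_top (ENNReal.natCast_ne_top d) (ENNReal.mul_ne_top hC1top hPtop)
  refine ⟨(2:ℝ) ^ (-δ), E.toReal + 1, Real.rpow_pos_of_pos two_pos _, by positivity,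
    fun μ _ => ⟨counting_lower d hd α β δ hαβ hδ μ, ?_⟩⟩
  refine le_trans (counting_upper d hd α β δ hαβ hδ μ) (mul_le_mul_left ?_ _)
  calc E = ENNReal.ofReal E.toReal := (ENNReal.ofReal_toReal hEtop).symm
    _ ≤ ENNReal.ofReal (E.toReal + 1) := ENNReal.ofReal_le_ofReal (by linarith)
end

section
/- Let $d \ge 2$, $\alpha > \beta \ge 0$, and $\delta > 0$. Define the layer $\mathfrak{L}_\mu := \{ j \in \mathbb{N}_0^d : \mu - 1 < \alpha |j|_1 - \beta |j|_\infty \le \mu \}$ for $\mu \in \mathbb{N}$. Then there is a constant $C > 0$ independent of $\mu$ such that $\sum_{j \in \mathfrak{L}_\mu} 2^{-\delta(|j|_1 - |j|_\infty)} \le C$ for all $\mu \in \mathbb{N} \setminus \{1\}$. -/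
open scoped ENNReal

/-- Counting lemma: if any two elements of `{t | P t}` are within `n` of each other,
then the sum of `c` over this set is at most `(n+1) * c`. -/
lemma LK.tsum_ite_le_of_gap (c : ℝ≥0∞) (P : ℕ → Prop) [DecidablePred P] (n : ℕ)
    (hP : ∀ t t', P t → P t' → t ≤ t' + n) :
    (∑' t : ℕ, if P t then c else 0) ≤ (n + 1 : ℕ) * c := by
  by_cases h : ∃ t, P t
  · set t₀ := Nat.find h with ht₀
    have key : ∀ t : ℕ, (if P t then c else 0) ≤
        (↑(Finset.Icc t₀ (t₀ + n)) : Set ℕ).indicator (fun _ => c) t := by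
      intro t
      by_cases hPt : P t
      · have h1 : t₀ ≤ t := Nat.find_min' h hPt
        have h2 : t ≤ t₀ + n := hP t t₀ hPt (Nat.find_spec h)
        rw [if_pos hPt, Set.indicator_of_mem]
        simp [Finset.mem_Icc, h1, h2]
      · simp [hPt]
    calc (∑' t : ℕ, if P t then c else 0)
        ≤ ∑' t : ℕ, (↑(Finset.Icc t₀ (t₀ + n)) : Set ℕ).indicator (fun _ => c) t :=
          ENNReal.tsum_le_tsum key
      _ = ∑ _t ∈ Finset.Icc t₀ (t₀ + n), c := by
          rw [← tsum_subtype]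
          exact Finset.tsum_subtype _ fun _ => c
      _ = (n + 1 : ℕ) * c := by
          rw [Finset.sum_const, Nat.card_Icc,
            show t₀ + n + 1 - t₀ = n + 1 from by omega]
          simp [nsmul_eq_mul]
  · push_neg at h
    simp only [if_neg (h _)]
    simp

/-- Geometric sum over `Fin n → ℕ`. -/
lemma LK.tsum_pi_fin (δ : ℝ) (n : ℕ) :
    (∑' v : Fin n → ℕ, (2 : ℝ≥0∞) ^ (-δ * (∑ k, (v k : ℝ)))) =
      (∑' m : ℕ, (2 : ℝ≥0∞) ^ (-δ * (m : ℝ))) ^ n := by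
  induction n with
  | zero =>
      rw [tsum_eq_single (fun _ => 0) (by
        intro b hb; exact absurd (Subsingleton.elim b _) hb)]
      simp
  | succ n ih =>
      rw [← (Fin.consEquiv fun _ : Fin (n + 1) => ℕ).tsum_eq, ENNReal.tsum_prod']
      have h1 : ∀ (a : ℕ) (v : Fin n → ℕ),
          (2 : ℝ≥0∞) ^ (-δ * (∑ k, (((Fin.consEquiv fun _ : Fin (n + 1) => ℕ) (a, v)) k : ℝ))) =
          (2 : ℝ≥0∞) ^ (-δ * (a : ℝ)) * (2 : ℝ≥0∞) ^ (-δ * (∑ k, (v k : ℝ))) := by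
        intro a v
        have hs : (∑ k, (((Fin.consEquiv fun _ : Fin (n + 1) => ℕ) (a, v)) k : ℝ))
            = (a : ℝ) + ∑ k, (v k : ℝ) := by
          have he : ((Fin.consEquiv fun _ : Fin (n + 1) => ℕ) (a, v)) = Fin.cons a v := rfl
          rw [he, ← Nat.cast_sum, Fin.sum_cons, Nat.cast_add, Nat.cast_sum]
        rw [hs, mul_add, ENNReal.rpow_add _ _ two_ne_zero ENNReal.ofNat_ne_top]
      simp_rw [h1, ENNReal.tsum_mul_left, ENNReal.tsum_mul_right, ih]
      rw [← pow_succ']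

/-- Geometric sum over any finite index type. -/
lemma LK.tsum_pi_fintype (δ : ℝ) (ι : Type*) [Fintype ι] [DecidableEq ι] :
    (∑' v : ι → ℕ, (2 : ℝ≥0∞) ^ (-δ * (∑ l, (v l : ℝ)))) =
      (∑' m : ℕ, (2 : ℝ≥0∞) ^ (-δ * (m : ℝ))) ^ (Fintype.card ι) := by
  set e := Fintype.equivFin ι with he
  set e' : (Fin (Fintype.card ι) → ℕ) ≃ (ι → ℕ) := Equiv.arrowCongr e.symm (Equiv.refl ℕ)
    with he'
  rw [← e'.tsum_eq, ← LK.tsum_pi_fin δ (Fintype.card ι)]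
  apply tsum_congr
  intro w
  congr 2
  exact Fintype.sum_equiv e (fun l => ((e' w) l : ℝ)) (fun k => (w k : ℝ)) (fun l => rfl)

lemma LK.G_ne_top (δ : ℝ) (hδ : 0 < δ) :
    (∑' m : ℕ, (2 : ℝ≥0∞) ^ (-δ * (m : ℝ))) ≠ ⊤ := by
  have h : ∀ m : ℕ, (2 : ℝ≥0∞) ^ (-δ * (m : ℝ)) = ((2 : ℝ≥0∞) ^ (-δ)) ^ m := by
    intro m
    rw [← ENNReal.rpow_natCast ((2 : ℝ≥0∞) ^ (-δ)) m, ← ENNReal.rpow_mul]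
  rw [tsum_congr h, ENNReal.tsum_geometric]
  have hr : (2 : ℝ≥0∞) ^ (-δ) < 1 := by
    have h2 := ENNReal.rpow_lt_rpow_of_exponent_lt (x := 2) (y := -δ) (z := 0)
      (by norm_num) ENNReal.ofNat_ne_top (by linarith)
    simpa using h2
  rw [Ne, ENNReal.inv_eq_top]
  exact (tsub_pos_of_lt hr).ne'

/-- 'Log-killer' lemma: for `d ≥ 2`, `α > β ≥ 0`, `δ > 0`, the weighted sums
`∑_{j ∈ 𝔏_μ} 2^{-δ(|j|₁ - |j|∞)}` over the anisotropic layers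
`𝔏_μ = { j ∈ ℕ₀^d : μ - 1 < α|j|₁ - β|j|∞ ≤ μ }` are bounded uniformly in
`μ ∈ ℕ \ {1}` (μ ≥ 2). -/
theorem log_killer (d : ℕ) (hd : 2 ≤ d) (α β δ : ℝ) (hβ : 0 ≤ β) (hαβ : β < α)
    (hδ : 0 < δ) :
    ∃ C : ℝ, 0 < C ∧ ∀ μ : ℕ, 2 ≤ μ →
      (∑' j : Fin d → ℕ,
        Set.indicator
          {j : Fin d → ℕ |
            (μ : ℝ) - 1 < α * (∑ i, (j i : ℝ)) - β * ((Finset.univ.sup j : ℕ) : ℝ) ∧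
            α * (∑ i, (j i : ℝ)) - β * ((Finset.univ.sup j : ℕ) : ℝ) ≤ (μ : ℝ)}
          (fun j =>
            (2 : ℝ≥0∞) ^ (-δ * ((∑ i, (j i : ℝ)) - ((Finset.univ.sup j : ℕ) : ℝ)))) j) ≤
        ENNReal.ofReal C := by
  classical
  have hd0 : 0 < d := by omega
  haveI : NeZero d := ⟨by omega⟩
  set G : ℝ≥0∞ := ∑' m : ℕ, (2 : ℝ≥0∞) ^ (-δ * (m : ℝ)) with hGdef
  have hGt : G ≠ ⊤ := LK.G_ne_top δ hδ
  set n : ℕ := ⌈(α - β)⁻¹⌉₊ with hn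
  set B : ℝ≥0∞ := d * ((n + 1 : ℕ) * G ^ (d - 1)) with hB
  have hBt : B ≠ ⊤ := by
    apply ENNReal.mul_ne_top (by simp)
    exact ENNReal.mul_ne_top (by simp) (ENNReal.pow_ne_top hGt)
  refine ⟨B.toReal + 1, by positivity, ?_⟩
  intro μ hμ
  set S : Set (Fin d → ℕ) :=
    {j : Fin d → ℕ |
      (μ : ℝ) - 1 < α * (∑ i, (j i : ℝ)) - β * ((Finset.univ.sup j : ℕ) : ℝ) ∧
      α * (∑ i, (j i : ℝ)) - β * ((Finset.univ.sup j : ℕ) : ℝ) ≤ (μ : ℝ)} with hS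
  set f : (Fin d → ℕ) → ℝ≥0∞ := fun j =>
    (2 : ℝ≥0∞) ^ (-δ * ((∑ i, (j i : ℝ)) - ((Finset.univ.sup j : ℕ) : ℝ))) with hf
  set h : Fin d → (Fin d → ℕ) → ℝ≥0∞ := fun i j =>
    if (j i = Finset.univ.sup j ∧ j ∈ S) then
      (2 : ℝ≥0∞) ^ (-δ * (∑ l ∈ Finset.univ.erase i, (j l : ℝ))) else 0 with hh
  have step1 : ∀ j, S.indicator f j ≤ ∑ i, h i j := by
    intro j
    by_cases hj : j ∈ S
    · obtain ⟨i₀, -, hi₀⟩ := Finset.exists_mem_eq_sup Finset.univ Finset.univ_nonempty j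
      have heq : S.indicator f j = h i₀ j := by
        rw [Set.indicator_of_mem hj]
        simp only [hh, hf]
        rw [if_pos ⟨hi₀.symm, hj⟩]
        congr 2
        rw [Finset.sum_erase_eq_sub (Finset.mem_univ i₀), ← hi₀]
      rw [heq]
      exact Finset.single_le_sum (f := fun i => h i j) (fun i _ => zero_le)
        (Finset.mem_univ i₀)
    · rw [Set.indicator_of_notMem hj]
      exact zero_le
  have step2 : ∀ i : Fin d, (∑' j : Fin d → ℕ, h i j) ≤ (n + 1 : ℕ) * G ^ (d - 1) := by
    intro i
    set e := Equiv.piSplitAt i (fun _ : Fin d => ℕ) with he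
    set K : ({l : Fin d // l ≠ i} → ℕ) → ℝ := fun v => ∑ l, (v l : ℝ) with hK
    have claim : ∀ (t : ℕ) (v : {l : Fin d // l ≠ i} → ℕ),
        h i (e.symm (t, v)) ≤
          (if ((μ : ℝ) - 1 < (α - β) * t + α * K v ∧ (α - β) * t + α * K v ≤ (μ : ℝ)) then
            (2 : ℝ≥0∞) ^ (-δ * K v) else 0) := by
      intro t v
      set j := e.symm (t, v) with hj
      have hji : j i = t := by simp [hj, he]
      have hjl : ∀ l : {l : Fin d // l ≠ i}, j (l : Fin d) = v l := by
        intro l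
        simp [hj, he, l.2]
      by_cases hcond : (j i = Finset.univ.sup j ∧ j ∈ S)
      · obtain ⟨hsup, hmem⟩ := hcond
        have herase : (∑ l ∈ Finset.univ.erase i, (j l : ℝ)) = K v := by
          rw [Finset.sum_subtype (Finset.univ.erase i)
            (p := fun l => l ≠ i) (by simp) (fun l => (j l : ℝ))]
          exact Finset.sum_congr rfl (fun l _ => by rw [hjl l])
        have hsum : (∑ l, (j l : ℝ)) = (t : ℝ) + K v := by
          rw [← Finset.add_sum_erase Finset.univ _ (Finset.mem_univ i), herase, hji]
        have hsupt : ((Finset.univ.sup j : ℕ) : ℝ) = (t : ℝ) := by rw [← hsup, hji]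
        have hmm := hmem
        obtain ⟨hm1, hm2⟩ :
            ((μ : ℝ) - 1 < α * (∑ l, (j l : ℝ)) - β * ((Finset.univ.sup j : ℕ) : ℝ) ∧
              α * (∑ l, (j l : ℝ)) - β * ((Finset.univ.sup j : ℕ) : ℝ) ≤ (μ : ℝ)) := hmm
        have hlin : α * (∑ l, (j l : ℝ)) - β * ((Finset.univ.sup j : ℕ) : ℝ)
            = (α - β) * t + α * K v := by
          rw [hsum, hsupt]; ring
        have hcond2 : (μ : ℝ) - 1 < (α - β) * t + α * K v ∧
            (α - β) * t + α * K v ≤ (μ : ℝ) := by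
          rw [← hlin]; exact ⟨hm1, hm2⟩
        simp only [hh]
        rw [if_pos ⟨hsup, hmem⟩, if_pos hcond2, herase]
      · simp only [hh]
        rw [if_neg hcond]
        exact zero_le
    calc (∑' j : Fin d → ℕ, h i j)
        = ∑' (t : ℕ) (v : {l : Fin d // l ≠ i} → ℕ), h i (e.symm (t, v)) := by
          rw [← e.symm.tsum_eq, ENNReal.tsum_prod']
      _ = ∑' (v : {l : Fin d // l ≠ i} → ℕ) (t : ℕ), h i (e.symm (t, v)) :=
          ENNReal.tsum_comm
      _ ≤ ∑' (v : {l : Fin d // l ≠ i} → ℕ),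
            ((n + 1 : ℕ) * (2 : ℝ≥0∞) ^ (-δ * K v)) := by
          apply ENNReal.tsum_le_tsum
          intro v
          calc (∑' t : ℕ, h i (e.symm (t, v)))
              ≤ ∑' t : ℕ, (if ((μ : ℝ) - 1 < (α - β) * t + α * K v ∧
                  (α - β) * t + α * K v ≤ (μ : ℝ)) then
                  (2 : ℝ≥0∞) ^ (-δ * K v) else 0) :=
                ENNReal.tsum_le_tsum (fun t => claim t v)
            _ ≤ (n + 1 : ℕ) * (2 : ℝ≥0∞) ^ (-δ * K v) := by
                apply LK.tsum_ite_le_of_gap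
                intro t t' ht ht'
                by_contra hcon
                push_neg at hcon
                have hab : 0 < α - β := by linarith
                have hinv : (α - β) * (α - β)⁻¹ = 1 := mul_inv_cancel₀ hab.ne'
                have hle : (α - β)⁻¹ ≤ (n : ℝ) := Nat.le_ceil _
                have hc : ((t' : ℝ) + n + 1 ≤ (t : ℝ)) := by
                  have hcc : (t' + n + 1 : ℕ) ≤ t := hcon
                  exact_mod_cast hcc
                have hprod : (α - β) * ((t' : ℝ) + n + 1) ≤ (α - β) * t :=
                  mul_le_mul_of_nonneg_left hc hab.le
                have hle2 : (1 : ℝ) ≤ (α - β) * n := by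
                  calc (1 : ℝ) = (α - β) * (α - β)⁻¹ := hinv.symm
                    _ ≤ (α - β) * n := mul_le_mul_of_nonneg_left hle hab.le
                nlinarith [hprod, hle2, ht.2, ht'.1]
      _ = (n + 1 : ℕ) * ∑' (v : {l : Fin d // l ≠ i} → ℕ),
            (2 : ℝ≥0∞) ^ (-δ * K v) := ENNReal.tsum_mul_left
      _ = (n + 1 : ℕ) * G ^ (d - 1) := by
          rw [hK]
          rw [LK.tsum_pi_fintype δ {l : Fin d // l ≠ i}]
          congr 2
          rw [Fintype.card_subtype_compl, Fintype.card_subtype_eq, Fintype.card_fin]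
  calc (∑' j : Fin d → ℕ, S.indicator f j)
      ≤ ∑' j : Fin d → ℕ, ∑ i, h i j := ENNReal.tsum_le_tsum step1
    _ = ∑ i, ∑' j : Fin d → ℕ, h i j :=
        Summable.tsum_finsetSum (fun i _ => ENNReal.summable)
    _ ≤ ∑ _i : Fin d, ((n + 1 : ℕ) * G ^ (d - 1)) :=
        Finset.sum_le_sum (fun i _ => step2 i)
    _ = B := by rw [Finset.sum_const]; simp [hB, nsmul_eq_mul]
    _ ≤ ENNReal.ofReal (B.toReal + 1) := by
        conv_lhs => rw [← ENNReal.ofReal_toReal hBt]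
        exact ENNReal.ofReal_le_ofReal (by linarith)
end

section
/- Let $d \in \mathbb{N}$, $0 < p_0, p_1, q_0, q_1 \le \infty$, and $r_0, r_1, s_0, s_1 \in \mathbb{R}$ with $\alpha := r_0 - r_1 - (1/p_0 - 1/p_1)_+$ and $\beta := s_1 - s_0$. Assume the index sets satisfy $|\mathfrak{D}_j| \sim 2^{|j|_1}$. If $\alpha \ge 0 > \beta$, or $\alpha > \beta \ge 0$, or $0 > \alpha d > \beta$, then the identity map is a continuous embedding $h^{r_0,s_0}_{p_0,q_0}b(\nabla) \hookrightarrow h^{r_1,s_1}_{p_1,q_1}b(\nabla)$. -/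
open scoped ENNReal

-- ℓ^p monotonicity: 0 < a ≤ b
lemma lp_mono {ι : Type*} (s : Finset ι) (g : ι → ℝ≥0∞) {a b : ℝ}
    (ha : 0 < a) (hab : a ≤ b) :
    (∑ k ∈ s, g k ^ b) ^ (1 / b) ≤ (∑ k ∈ s, g k ^ a) ^ (1 / a) := by
  have hb : 0 < b := ha.trans_le hab
  set S := ∑ k ∈ s, g k ^ a with hS
  rcases eq_or_ne S ⊤ with h | h
  · rw [h, ENNReal.top_rpow_of_pos (by positivity)]; exact le_top
  have key : ∀ k ∈ s, g k ^ b ≤ g k ^ a * S ^ ((b - a) / a) := by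
    intro k hk
    rcases eq_or_ne (g k) 0 with h0 | h0
    · simp [h0, ENNReal.zero_rpow_of_pos ha, ENNReal.zero_rpow_of_pos hb]
    have hgS : g k ≤ S ^ (1 / a) := by
      have : g k ^ a ≤ S := Finset.single_le_sum (f := fun k => g k ^ a)
        (fun _ _ => zero_le) hk
      calc g k = (g k ^ a) ^ (1 / a) := by
            rw [← ENNReal.rpow_mul, mul_one_div, div_self ha.ne', ENNReal.rpow_one]
        _ ≤ S ^ (1 / a) := ENNReal.rpow_le_rpow this (by positivity)
    have hgt : g k ≠ ⊤ := by
      intro ht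
      have h1 : g k ^ a ≤ S := Finset.single_le_sum (f := fun k => g k ^ a)
        (fun _ _ => zero_le) hk
      rw [ht, ENNReal.top_rpow_of_pos ha] at h1
      exact h (top_le_iff.mp h1)
    calc g k ^ b = g k ^ a * g k ^ (b - a) := by
          rw [← ENNReal.rpow_add _ _ h0 hgt]; ring_nf
      _ ≤ g k ^ a * (S ^ (1 / a)) ^ (b - a) :=
          mul_le_mul_right (ENNReal.rpow_le_rpow hgS (by linarith)) _
      _ = g k ^ a * S ^ ((b - a) / a) := by
          rw [← ENNReal.rpow_mul]; ring_nf
  calc (∑ k ∈ s, g k ^ b) ^ (1 / b)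
      ≤ (∑ k ∈ s, g k ^ a * S ^ ((b - a) / a)) ^ (1 / b) :=
        ENNReal.rpow_le_rpow (Finset.sum_le_sum key) (by positivity)
    _ = (S * S ^ ((b - a) / a)) ^ (1 / b) := by rw [← Finset.sum_mul]
    _ = S ^ (1 / a) := by
        rcases eq_or_ne S 0 with h0 | h0
        · rw [h0, zero_mul, ENNReal.zero_rpow_of_pos (by positivity),
            ENNReal.zero_rpow_of_pos (by positivity)]
        · have : S * S ^ ((b - a) / a) = S ^ (1 + (b - a) / a) := by
            rw [ENNReal.rpow_add _ _ h0 h, ENNReal.rpow_one]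
          rw [this, ← ENNReal.rpow_mul]
          congr 1
          field_simp
          ring

-- Hölder: 0 < b < a
lemma lp_holder {ι : Type*} (s : Finset ι) (g : ι → ℝ≥0∞) {a b : ℝ}
    (hb : 0 < b) (hba : b < a) :
    (∑ k ∈ s, g k ^ b) ^ (1 / b) ≤
      (s.card : ℝ≥0∞) ^ (1 / b - 1 / a) * (∑ k ∈ s, g k ^ a) ^ (1 / a) := by
  have ha : 0 < a := hb.trans hba
  have hp : (1 : ℝ) ≤ a / b := (one_le_div hb).mpr hba.le
  have H := ENNReal.inner_le_weight_mul_Lp_of_nonneg s hp (fun _ => 1) (fun k => g k ^ b)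
  simp only [one_mul] at H
  have h1 : ∀ k, (g k ^ b) ^ (a / b) = g k ^ a := by
    intro k
    rw [← ENNReal.rpow_mul]
    congr 1
    field_simp
  simp only [h1, Finset.sum_const, nsmul_eq_mul, mul_one] at H
  have h2 : ((a / b)⁻¹ : ℝ) = b / a := by field_simp
  calc (∑ k ∈ s, g k ^ b) ^ (1 / b)
      ≤ (((s.card : ℝ≥0∞)) ^ (1 - (a/b)⁻¹) * (∑ k ∈ s, g k ^ a) ^ (a/b)⁻¹) ^ (1 / b) :=
        ENNReal.rpow_le_rpow H (by positivity)
    _ = (s.card : ℝ≥0∞) ^ (1 / b - 1 / a) * (∑ k ∈ s, g k ^ a) ^ (1 / a) := by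
        rw [ENNReal.mul_rpow_of_nonneg _ _ (by positivity), ← ENNReal.rpow_mul,
          ← ENNReal.rpow_mul, h2]
        have e1 : (1 - b / a) * (1 / b) = 1 / b - 1 / a := by
          field_simp
        have e2 : (b / a) * (1 / b) = 1 / a := by
          rw [div_mul_div_comm, mul_one, mul_comm a b, ← div_div, div_self hb.ne']
        rw [e1, e2]

-- sup ≤ ℓ^a
lemma sup_le_lp {ι : Type*} (s : Finset ι) (g : ι → ℝ≥0∞) {a : ℝ} (ha : 0 < a) :
    s.sup g ≤ (∑ k ∈ s, g k ^ a) ^ (1 / a) := by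
  refine Finset.sup_le fun k hk => ?_
  calc g k = (g k ^ a) ^ (1 / a) := by
        rw [← ENNReal.rpow_mul, mul_one_div, div_self ha.ne', ENNReal.rpow_one]
    _ ≤ (∑ k ∈ s, g k ^ a) ^ (1 / a) :=
        ENNReal.rpow_le_rpow (Finset.single_le_sum (f := fun k => g k ^ a)
          (fun _ _ => zero_le) hk) (by positivity)

-- ℓ^b ≤ card^{1/b} * sup
lemma lp_le_sup {ι : Type*} (s : Finset ι) (g : ι → ℝ≥0∞) {b : ℝ} (hb : 0 < b) :
    (∑ k ∈ s, g k ^ b) ^ (1 / b) ≤ (s.card : ℝ≥0∞) ^ (1 / b) * s.sup g := by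
  have h1 : ∀ k ∈ s, g k ^ b ≤ (s.sup g) ^ b := fun k hk =>
    ENNReal.rpow_le_rpow (Finset.le_sup hk) hb.le
  calc (∑ k ∈ s, g k ^ b) ^ (1 / b)
      ≤ (∑ _k ∈ s, (s.sup g) ^ b) ^ (1 / b) :=
        ENNReal.rpow_le_rpow (Finset.sum_le_sum h1) (by positivity)
    _ = ((s.card : ℝ≥0∞) * (s.sup g) ^ b) ^ (1 / b) := by
        rw [Finset.sum_const, nsmul_eq_mul]
    _ = (s.card : ℝ≥0∞) ^ (1 / b) * s.sup g := by
        rw [ENNReal.mul_rpow_of_nonneg _ _ (by positivity), ← ENNReal.rpow_mul,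
          mul_one_div, div_self hb.ne', ENNReal.rpow_one]

/-- master comparison of the inner `ℓ^p`-type quantities -/
lemma G_compare {ι : Type*} (s : Finset ι) (g : ι → ℝ≥0∞) (p₀ p₁ : ℝ≥0∞)
    (hp₀ : 0 < p₀) (hp₁ : 0 < p₁) :
    (if p₁ = ∞ then s.sup g else (∑ k ∈ s, g k ^ p₁.toReal) ^ (1 / p₁.toReal)) ≤
      (s.card : ℝ≥0∞) ^ (max (p₁⁻¹.toReal - p₀⁻¹.toReal) 0) *
      (if p₀ = ∞ then s.sup g else (∑ k ∈ s, g k ^ p₀.toReal) ^ (1 / p₀.toReal)) := by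
  rcases eq_or_ne p₀ ∞ with h0 | h0 <;> rcases eq_or_ne p₁ ∞ with h1 | h1
  · simp [h0, h1]
  · -- p₀ = ∞, p₁ finite
    have hb : 0 < p₁.toReal := ENNReal.toReal_pos hp₁.ne' h1
    have ht : max (p₁⁻¹.toReal - p₀⁻¹.toReal) 0 = 1 / p₁.toReal := by
      rw [h0]
      simp [ENNReal.toReal_inv, max_eq_left, one_div, (by positivity : (0:ℝ) ≤ p₁.toReal⁻¹)]
    rw [if_neg h1, if_pos h0, ht]
    exact lp_le_sup s g hb
  · -- p₀ finite, p₁ = ∞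
    have ha : 0 < p₀.toReal := ENNReal.toReal_pos hp₀.ne' h0
    have ht : max (p₁⁻¹.toReal - p₀⁻¹.toReal) 0 = 0 := by
      rw [h1]
      simp [ENNReal.toReal_inv, max_eq_right, one_div]
    rw [if_pos h1, if_neg h0, ht, ENNReal.rpow_zero, one_mul]
    exact sup_le_lp s g ha
  · -- both finite
    have ha : 0 < p₀.toReal := ENNReal.toReal_pos hp₀.ne' h0
    have hb : 0 < p₁.toReal := ENNReal.toReal_pos hp₁.ne' h1
    rw [if_neg h1, if_neg h0]
    rcases le_or_gt p₀.toReal p₁.toReal with hab | hab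
    · have ht : max (p₁⁻¹.toReal - p₀⁻¹.toReal) 0 = 0 := by
        rw [max_eq_right]
        rw [ENNReal.toReal_inv, ENNReal.toReal_inv, sub_nonpos]
        exact inv_anti₀ ha hab
      rw [ht, ENNReal.rpow_zero, one_mul]
      exact lp_mono s g ha hab
    · have ht : max (p₁⁻¹.toReal - p₀⁻¹.toReal) 0 = 1 / p₁.toReal - 1 / p₀.toReal := by
        rw [max_eq_left, ENNReal.toReal_inv, ENNReal.toReal_inv, one_div, one_div]
        rw [ENNReal.toReal_inv, ENNReal.toReal_inv, sub_nonneg]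
        exact inv_anti₀ hb hab.le
      rw [ht]
      exact lp_holder s g hb hab

lemma tsum_pi_prod (d : ℕ) (g : ℕ → ℝ≥0∞) :
    ∑' j : Fin d → ℕ, ∏ i, g (j i) = (∑' n, g n) ^ d := by
  induction d with
  | zero =>
      rw [tsum_eq_single (default : Fin 0 → ℕ)
        (fun b hb => absurd (Subsingleton.elim b default) hb)]
      simp
  | succ d ih =>
      rw [← (Fin.consEquiv (fun _ => ℕ)).tsum_eq (fun j => ∏ i, g (j i))]
      have : ∀ x : ℕ × (Fin d → ℕ),
          (∏ i, g ((Fin.consEquiv (fun _ => ℕ)) x i)) = g x.1 * ∏ i, g (x.2 i) := by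
        intro x
        rw [Fin.prod_univ_succ]
        simp [Fin.consEquiv]
      simp_rw [this]
      rw [ENNReal.tsum_prod']
      simp_rw [ENNReal.tsum_mul_left]
      rw [ENNReal.tsum_mul_right, ih, pow_succ, mul_comm]

lemma tsum_exp_lt_top (d : ℕ) {c : ℝ} (hc : 0 < c) :
    ∑' j : Fin d → ℕ, ENNReal.ofReal ((2 : ℝ) ^ (-c * ∑ i, (j i : ℝ))) < ∞ := by
  set r : ℝ≥0∞ := ENNReal.ofReal ((2 : ℝ) ^ (-c)) with hr
  have hterm : ∀ j : Fin d → ℕ,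
      ENNReal.ofReal ((2 : ℝ) ^ (-c * ∑ i, (j i : ℝ))) = ∏ i, r ^ (j i) := by
    intro j
    have h1 : (-c * ∑ i, (j i : ℝ)) = ∑ i, (-c * (j i : ℝ)) := by rw [Finset.mul_sum]
    rw [h1, Real.rpow_sum_of_pos two_pos, ENNReal.ofReal_prod_of_nonneg
      (fun i _ => Real.rpow_nonneg (by norm_num) _)]
    refine Finset.prod_congr rfl fun i _ => ?_
    rw [mul_comm (-c) ((j i : ℝ)), mul_comm, Real.rpow_mul (by norm_num),
      Real.rpow_natCast, ENNReal.ofReal_pow (Real.rpow_nonneg (by norm_num) _)]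
  simp_rw [hterm]
  rw [tsum_pi_prod d (fun n => r ^ n), ENNReal.tsum_geometric]
  have hr1 : r < 1 := by
    rw [hr, ← ENNReal.ofReal_one]
    exact ENNReal.ofReal_lt_ofReal_iff_of_nonneg (Real.rpow_nonneg (by norm_num) _) |>.mpr
      (Real.rpow_lt_one_of_one_lt_of_neg (by norm_num) (by linarith))
  have : (1 - r) ≠ 0 := by
    rw [ne_eq, tsub_eq_zero_iff_le]
    exact fun h => absurd hr1 (not_lt.mpr h)
  exact ENNReal.pow_lt_top (ENNReal.inv_lt_top.mpr (pos_iff_ne_zero.mpr this))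

/-- The hybrid Besov sequence space quasi-norm `‖a | h^{r,s}_{p,q} b(∇)‖` for
`0 < p, q ≤ ∞`:
`(∑_j 2^{q((r-1/p)|j|₁ + s|j|∞)} (∑_{k ∈ 𝔇_j} |a_{j,k}|^p)^{q/p})^{1/q}`,
with the usual sup-modifications when `p = ∞` or `q = ∞`. -/
noncomputable def hybridNorm (d : ℕ) (D : (Fin d → ℕ) → Finset (Fin d → ℤ))
    (r s : ℝ) (p q : ℝ≥0∞) (a : (Fin d → ℕ) → (Fin d → ℤ) → ℂ) : ℝ≥0∞ :=
  let G : (Fin d → ℕ) → ℝ≥0∞ := fun j =>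
    if p = ∞ then (D j).sup (fun k => (‖a j k‖₊ : ℝ≥0∞))
    else (∑ k ∈ D j, (‖a j k‖₊ : ℝ≥0∞) ^ p.toReal) ^ (1 / p.toReal)
  let F : (Fin d → ℕ) → ℝ≥0∞ := fun j =>
    ENNReal.ofReal
        ((2 : ℝ) ^ ((r - p⁻¹.toReal) * (∑ i, (j i : ℝ)) +
          s * ((Finset.univ.sup j : ℕ) : ℝ))) * G j
  if q = ∞ then ⨆ j, F j else (∑' j, F j ^ q.toReal) ^ (1 / q.toReal)

/-- Sobolev-type embeddings of hybrid Besov sequence spaces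
(Lemma "Change of integrability and/or smoothness I"): with
`α = r₀ - r₁ - (1/p₀ - 1/p₁)₊` and `β = s₁ - s₀`, assuming `|𝔇_j| ∼ 2^{|j|₁}`,
if `α ≥ 0 > β`, or `α > β ≥ 0`, or `0 > αd > β`, then
`h^{r₀,s₀}_{p₀,q₀}b(∇) ↪ h^{r₁,s₁}_{p₁,q₁}b(∇)`. -/
theorem hybrid_embedding (d : ℕ) (hd : 0 < d)
    (D : (Fin d → ℕ) → Finset (Fin d → ℤ))
    (hD : ∃ c₁ c₂ : ℝ, 0 < c₁ ∧ 0 < c₂ ∧ ∀ j : Fin d → ℕ,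
      c₁ * (2 : ℝ) ^ (∑ i, (j i : ℝ)) ≤ ((D j).card : ℝ) ∧
      ((D j).card : ℝ) ≤ c₂ * (2 : ℝ) ^ (∑ i, (j i : ℝ)))
    (p₀ p₁ q₀ q₁ : ℝ≥0∞) (hp₀ : 0 < p₀) (hp₁ : 0 < p₁) (hq₀ : 0 < q₀) (hq₁ : 0 < q₁)
    (r₀ r₁ s₀ s₁ : ℝ)
    (hcase :
      (0 ≤ r₀ - r₁ - max (p₀⁻¹.toReal - p₁⁻¹.toReal) 0 ∧ s₁ - s₀ < 0) ∨
      (s₁ - s₀ < r₀ - r₁ - max (p₀⁻¹.toReal - p₁⁻¹.toReal) 0 ∧ 0 ≤ s₁ - s₀) ∨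
      ((r₀ - r₁ - max (p₀⁻¹.toReal - p₁⁻¹.toReal) 0) * d < 0 ∧
        s₁ - s₀ < (r₀ - r₁ - max (p₀⁻¹.toReal - p₁⁻¹.toReal) 0) * d)) :
    ∃ C : ℝ, 0 < C ∧ ∀ a : (Fin d → ℕ) → (Fin d → ℤ) → ℂ,
      hybridNorm d D r₁ s₁ p₁ q₁ a ≤
        ENNReal.ofReal C * hybridNorm d D r₀ s₀ p₀ q₀ a := by
  classical
  obtain ⟨c₁, c₂, hc₁, hc₂, hcard⟩ := hD
  have hd' : (0:ℝ) < d := by exact_mod_cast hd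
  set tt := max (p₁⁻¹.toReal - p₀⁻¹.toReal) 0 with htt
  have ht0 : 0 ≤ tt := le_max_right _ _
  -- basic facts about |j|₁ and |j|∞
  have hS0 : ∀ j : Fin d → ℕ, 0 ≤ ∑ i, (j i : ℝ) :=
    fun j => Finset.sum_nonneg fun i _ => Nat.cast_nonneg _
  have hM0 : ∀ j : Fin d → ℕ, 0 ≤ ((Finset.univ.sup j : ℕ) : ℝ) := fun j => Nat.cast_nonneg _
  have hMS : ∀ j : Fin d → ℕ, ((Finset.univ.sup j : ℕ) : ℝ) ≤ ∑ i, (j i : ℝ) := by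
    intro j
    have h1 : (Finset.univ.sup j : ℕ) ≤ ∑ i, j i :=
      Finset.sup_le fun i _ => Finset.single_le_sum (fun _ _ => Nat.zero_le _)
        (Finset.mem_univ i)
    calc ((Finset.univ.sup j : ℕ) : ℝ) ≤ ((∑ i, j i : ℕ) : ℝ) := Nat.cast_le.mpr h1
      _ = ∑ i, (j i : ℝ) := by push_cast; rfl
  have hSM : ∀ j : Fin d → ℕ, (∑ i, (j i : ℝ)) ≤ d * ((Finset.univ.sup j : ℕ) : ℝ) := by
    intro j
    have h1 : (∑ i, j i) ≤ d * Finset.univ.sup j := by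
      calc (∑ i, j i) ≤ ∑ _i : Fin d, Finset.univ.sup j :=
            Finset.sum_le_sum fun i _ => Finset.le_sup (Finset.mem_univ i)
        _ = d * Finset.univ.sup j := by simp [Finset.sum_const, Finset.card_univ]
    calc (∑ i, (j i : ℝ)) = ((∑ i, j i : ℕ) : ℝ) := by push_cast; rfl
      _ ≤ ((d * Finset.univ.sup j : ℕ) : ℝ) := Nat.cast_le.mpr h1
      _ = d * ((Finset.univ.sup j : ℕ) : ℝ) := by push_cast; rfl
  -- decay rate δ
  obtain ⟨δ, hδ, hwle⟩ : ∃ δ : ℝ, 0 < δ ∧ ∀ j : Fin d → ℕ,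
      -(r₀ - r₁ - max (p₀⁻¹.toReal - p₁⁻¹.toReal) 0) * (∑ i, (j i : ℝ)) +
        (s₁ - s₀) * ((Finset.univ.sup j : ℕ) : ℝ) ≤ -δ * (∑ i, (j i : ℝ)) := by
    set α := r₀ - r₁ - max (p₀⁻¹.toReal - p₁⁻¹.toReal) 0 with hα
    set β := s₁ - s₀ with hβ
    rcases hcase with ⟨h1, h2⟩ | ⟨h1, h2⟩ | ⟨h1, h2⟩
    · refine ⟨-β / d, div_pos (by linarith) hd', fun j => ?_⟩
      have e1 : -α * (∑ i, (j i : ℝ)) ≤ 0 := by nlinarith [hS0 j]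
      have e2 : β * ((Finset.univ.sup j : ℕ) : ℝ) ≤ β * ((∑ i, (j i : ℝ)) / d) := by
        rw [mul_le_mul_left_of_neg h2, div_le_iff₀ hd']
        nlinarith [hSM j]
      calc -α * (∑ i, (j i : ℝ)) + β * ((Finset.univ.sup j : ℕ) : ℝ)
          ≤ 0 + β * ((∑ i, (j i : ℝ)) / d) := add_le_add e1 e2
        _ = -(-β / ↑d) * (∑ i, (j i : ℝ)) := by rw [zero_add]; ring
    · refine ⟨α - β, by linarith, fun j => ?_⟩
      nlinarith [mul_nonneg h2 (sub_nonneg.mpr (hMS j)), hS0 j]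
    · have hα0 : α < 0 := by nlinarith
      refine ⟨(α * ↑d - β) / d, div_pos (by linarith) hd', fun j => ?_⟩
      have e1 : -α * (∑ i, (j i : ℝ)) ≤ -α * (↑d * ((Finset.univ.sup j : ℕ) : ℝ)) := by
        nlinarith [hSM j]
      have e2 : (β - α * ↑d) * ((Finset.univ.sup j : ℕ) : ℝ) ≤
          (β - α * ↑d) * ((∑ i, (j i : ℝ)) / d) := by
        rw [mul_le_mul_left_of_neg (by linarith), div_le_iff₀ hd']
        nlinarith [hSM j]
      calc -α * (∑ i, (j i : ℝ)) + β * ((Finset.univ.sup j : ℕ) : ℝ)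
          ≤ -α * (↑d * ((Finset.univ.sup j : ℕ) : ℝ)) + β * ((Finset.univ.sup j : ℕ) : ℝ) :=
            add_le_add_left e1 _
        _ = (β - α * ↑d) * ((Finset.univ.sup j : ℕ) : ℝ) := by ring
        _ ≤ (β - α * ↑d) * ((∑ i, (j i : ℝ)) / d) := e2
        _ = -((α * ↑d - β) / ↑d) * (∑ i, (j i : ℝ)) := by ring
  -- exponent identity
  have hco : r₁ - p₁⁻¹.toReal + (tt - (r₀ - p₀⁻¹.toReal)) =
      -(r₀ - r₁ - max (p₀⁻¹.toReal - p₁⁻¹.toReal) 0) := by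
    rw [htt]
    rcases le_total p₀⁻¹.toReal p₁⁻¹.toReal with h | h
    · rw [max_eq_left (by linarith), max_eq_right (by linarith)]; ring
    · rw [max_eq_right (by linarith), max_eq_left (by linarith)]; ring
  have hexp : ∀ j : Fin d → ℕ,
      (r₁ - p₁⁻¹.toReal) * (∑ i, (j i : ℝ)) + s₁ * ((Finset.univ.sup j : ℕ) : ℝ) +
        tt * (∑ i, (j i : ℝ)) -
        ((r₀ - p₀⁻¹.toReal) * (∑ i, (j i : ℝ)) + s₀ * ((Finset.univ.sup j : ℕ) : ℝ)) ≤
        -δ * (∑ i, (j i : ℝ)) := by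
    intro j
    have h1 := hwle j
    nlinarith [mul_le_mul_of_nonneg_right (le_of_eq hco) (hS0 j)]
  -- card power bound
  have hcardpow : ∀ j : Fin d → ℕ, ((D j).card : ℝ≥0∞) ^ tt ≤
      ENNReal.ofReal (c₂ ^ tt * (2 : ℝ) ^ (tt * ∑ i, (j i : ℝ))) := by
    intro j
    have h1 : ((D j).card : ℝ≥0∞) = ENNReal.ofReal ((D j).card : ℝ) := by
      rw [ENNReal.ofReal_natCast]
    rw [h1, ENNReal.ofReal_rpow_of_nonneg (Nat.cast_nonneg _) ht0]
    apply ENNReal.ofReal_le_ofReal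
    calc ((D j).card : ℝ) ^ tt
        ≤ (c₂ * (2 : ℝ) ^ (∑ i, (j i : ℝ))) ^ tt :=
          Real.rpow_le_rpow (Nat.cast_nonneg _) (hcard j).2 ht0
      _ = c₂ ^ tt * (2 : ℝ) ^ (tt * ∑ i, (j i : ℝ)) := by
          rw [Real.mul_rpow hc₂.le (Real.rpow_nonneg (by norm_num) _),
            ← Real.rpow_mul (by norm_num), mul_comm (∑ i, (j i : ℝ)) tt]
  -- the per-j key estimate
  have hkey : ∀ (a : (Fin d → ℕ) → (Fin d → ℤ) → ℂ) (j : Fin d → ℕ),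
      ENNReal.ofReal ((2 : ℝ) ^ ((r₁ - p₁⁻¹.toReal) * (∑ i, (j i : ℝ)) +
          s₁ * ((Finset.univ.sup j : ℕ) : ℝ))) *
        (if p₁ = ∞ then (D j).sup (fun k => (‖a j k‖₊ : ℝ≥0∞))
          else (∑ k ∈ D j, (‖a j k‖₊ : ℝ≥0∞) ^ p₁.toReal) ^ (1 / p₁.toReal)) ≤
      ENNReal.ofReal (c₂ ^ tt) * ENNReal.ofReal ((2 : ℝ) ^ (-δ * ∑ i, (j i : ℝ))) *
        (ENNReal.ofReal ((2 : ℝ) ^ ((r₀ - p₀⁻¹.toReal) * (∑ i, (j i : ℝ)) +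
          s₀ * ((Finset.univ.sup j : ℕ) : ℝ))) *
          (if p₀ = ∞ then (D j).sup (fun k => (‖a j k‖₊ : ℝ≥0∞))
            else (∑ k ∈ D j, (‖a j k‖₊ : ℝ≥0∞) ^ p₀.toReal) ^ (1 / p₀.toReal))) := by
    intro a j
    have hG := G_compare (D j) (fun k => (‖a j k‖₊ : ℝ≥0∞)) p₀ p₁ hp₀ hp₁
    rw [← htt] at hG
    set G0 : ℝ≥0∞ := if p₀ = ∞ then (D j).sup (fun k => (‖a j k‖₊ : ℝ≥0∞))
      else (∑ k ∈ D j, (‖a j k‖₊ : ℝ≥0∞) ^ p₀.toReal) ^ (1 / p₀.toReal) with hG0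
    set G1 : ℝ≥0∞ := if p₁ = ∞ then (D j).sup (fun k => (‖a j k‖₊ : ℝ≥0∞))
      else (∑ k ∈ D j, (‖a j k‖₊ : ℝ≥0∞) ^ p₁.toReal) ^ (1 / p₁.toReal) with hG1
    set e1 : ℝ := (r₁ - p₁⁻¹.toReal) * (∑ i, (j i : ℝ)) +
      s₁ * ((Finset.univ.sup j : ℕ) : ℝ) with he1
    set e0 : ℝ := (r₀ - p₀⁻¹.toReal) * (∑ i, (j i : ℝ)) +
      s₀ * ((Finset.univ.sup j : ℕ) : ℝ) with he0
    calc ENNReal.ofReal ((2:ℝ) ^ e1) * G1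
        ≤ ENNReal.ofReal ((2:ℝ) ^ e1) * (((D j).card : ℝ≥0∞) ^ tt * G0) :=
          mul_le_mul_right hG _
      _ ≤ ENNReal.ofReal ((2:ℝ) ^ e1) *
            (ENNReal.ofReal (c₂ ^ tt * (2:ℝ) ^ (tt * ∑ i, (j i : ℝ))) * G0) :=
          mul_le_mul_right (mul_le_mul_left (hcardpow j) _) _
      _ = ENNReal.ofReal (c₂ ^ tt * (2:ℝ) ^ (e1 + tt * (∑ i, (j i : ℝ)) - e0) *
            (2:ℝ) ^ e0) * G0 := by
          have h2 : (2:ℝ) ^ e1 * (2:ℝ) ^ (tt * ∑ i, (j i : ℝ)) =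
              (2:ℝ) ^ (e1 + tt * ∑ i, (j i : ℝ)) :=
            (Real.rpow_add (by norm_num) _ _).symm
          have h3 : (2:ℝ) ^ (e1 + tt * (∑ i, (j i : ℝ)) - e0) * (2:ℝ) ^ e0 =
              (2:ℝ) ^ (e1 + tt * ∑ i, (j i : ℝ)) := by
            rw [← Real.rpow_add (by norm_num : (0:ℝ) < 2)]
            congr 1
            ring
          have hre : (2:ℝ) ^ e1 * (c₂ ^ tt * (2:ℝ) ^ (tt * ∑ i, (j i : ℝ))) =
              c₂ ^ tt * (2:ℝ) ^ (e1 + tt * (∑ i, (j i : ℝ)) - e0) * (2:ℝ) ^ e0 := by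
            calc (2:ℝ) ^ e1 * (c₂ ^ tt * (2:ℝ) ^ (tt * ∑ i, (j i : ℝ)))
                = c₂ ^ tt * ((2:ℝ) ^ e1 * (2:ℝ) ^ (tt * ∑ i, (j i : ℝ))) := by ring
              _ = c₂ ^ tt * ((2:ℝ) ^ (e1 + tt * (∑ i, (j i : ℝ)) - e0) * (2:ℝ) ^ e0) := by
                  rw [h2, h3]
              _ = c₂ ^ tt * (2:ℝ) ^ (e1 + tt * (∑ i, (j i : ℝ)) - e0) * (2:ℝ) ^ e0 := by
                  ring
          rw [← mul_assoc, ← ENNReal.ofReal_mul (Real.rpow_nonneg (by norm_num) _), hre]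
      _ ≤ ENNReal.ofReal (c₂ ^ tt * (2:ℝ) ^ (-δ * ∑ i, (j i : ℝ)) * (2:ℝ) ^ e0) * G0 := by
          apply mul_le_mul_left
          apply ENNReal.ofReal_le_ofReal
          apply mul_le_mul_of_nonneg_right _ (Real.rpow_nonneg (by norm_num) _)
          apply mul_le_mul_of_nonneg_left _ (Real.rpow_nonneg hc₂.le _)
          exact Real.rpow_le_rpow_of_exponent_le (by norm_num) (hexp j)
      _ = ENNReal.ofReal (c₂ ^ tt) * ENNReal.ofReal ((2:ℝ) ^ (-δ * ∑ i, (j i : ℝ))) *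
            (ENNReal.ofReal ((2:ℝ) ^ e0) * G0) := by
          rw [ENNReal.ofReal_mul (mul_nonneg (Real.rpow_nonneg hc₂.le _)
            (Real.rpow_nonneg (by norm_num) _)),
            ENNReal.ofReal_mul (Real.rpow_nonneg hc₂.le _)]
          ring
  -- unfolding of the norm
  have hnorm : ∀ (r s : ℝ) (p q : ℝ≥0∞) (a : (Fin d → ℕ) → (Fin d → ℤ) → ℂ),
      hybridNorm d D r s p q a =
      (if q = ∞ then
        ⨆ j, (ENNReal.ofReal ((2 : ℝ) ^ ((r - p⁻¹.toReal) * (∑ i, (j i : ℝ)) +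
            s * ((Finset.univ.sup j : ℕ) : ℝ))) *
          (if p = ∞ then (D j).sup (fun k => (‖a j k‖₊ : ℝ≥0∞))
            else (∑ k ∈ D j, (‖a j k‖₊ : ℝ≥0∞) ^ p.toReal) ^ (1 / p.toReal)))
      else (∑' j, (ENNReal.ofReal ((2 : ℝ) ^ ((r - p⁻¹.toReal) * (∑ i, (j i : ℝ)) +
            s * ((Finset.univ.sup j : ℕ) : ℝ))) *
          (if p = ∞ then (D j).sup (fun k => (‖a j k‖₊ : ℝ≥0∞))
            else (∑ k ∈ D j, (‖a j k‖₊ : ℝ≥0∞) ^ p.toReal) ^ (1 / p.toReal))) ^ q.toReal) ^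
          (1 / q.toReal)) :=
    fun _ _ _ _ _ => rfl
  -- each term is dominated by the norm
  have hF0N : ∀ (a : (Fin d → ℕ) → (Fin d → ℤ) → ℂ) (j : Fin d → ℕ),
      ENNReal.ofReal ((2 : ℝ) ^ ((r₀ - p₀⁻¹.toReal) * (∑ i, (j i : ℝ)) +
          s₀ * ((Finset.univ.sup j : ℕ) : ℝ))) *
        (if p₀ = ∞ then (D j).sup (fun k => (‖a j k‖₊ : ℝ≥0∞))
          else (∑ k ∈ D j, (‖a j k‖₊ : ℝ≥0∞) ^ p₀.toReal) ^ (1 / p₀.toReal)) ≤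
      hybridNorm d D r₀ s₀ p₀ q₀ a := by
    intro a j
    rw [hnorm r₀ s₀ p₀ q₀ a]
    rcases eq_or_ne q₀ ∞ with h | h
    · rw [if_pos h]
      exact le_iSup (fun j => ENNReal.ofReal ((2 : ℝ) ^ ((r₀ - p₀⁻¹.toReal) *
        (∑ i, (j i : ℝ)) + s₀ * ((Finset.univ.sup j : ℕ) : ℝ))) *
        (if p₀ = ∞ then (D j).sup (fun k => (‖a j k‖₊ : ℝ≥0∞))
          else (∑ k ∈ D j, (‖a j k‖₊ : ℝ≥0∞) ^ p₀.toReal) ^ (1 / p₀.toReal))) j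
    · rw [if_neg h]
      have hm : 0 < q₀.toReal := ENNReal.toReal_pos hq₀.ne' h
      set x := ENNReal.ofReal ((2 : ℝ) ^ ((r₀ - p₀⁻¹.toReal) * (∑ i, (j i : ℝ)) +
          s₀ * ((Finset.univ.sup j : ℕ) : ℝ))) *
        (if p₀ = ∞ then (D j).sup (fun k => (‖a j k‖₊ : ℝ≥0∞))
          else (∑ k ∈ D j, (‖a j k‖₊ : ℝ≥0∞) ^ p₀.toReal) ^ (1 / p₀.toReal)) with hx
      calc x = (x ^ q₀.toReal) ^ (1 / q₀.toReal) := by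
            rw [← ENNReal.rpow_mul, mul_one_div, div_self hm.ne', ENNReal.rpow_one]
        _ ≤ _ := ENNReal.rpow_le_rpow (ENNReal.le_tsum j) (by positivity)
  rcases eq_or_ne q₁ ∞ with hq1t | hq1t
  · -- q₁ = ∞
    refine ⟨c₂ ^ tt, Real.rpow_pos_of_pos hc₂ _, fun a => ?_⟩
    rw [hnorm r₁ s₁ p₁ q₁ a, if_pos hq1t]
    refine iSup_le fun j => ?_
    refine le_trans (hkey a j) ?_
    have hone : ENNReal.ofReal ((2 : ℝ) ^ (-δ * ∑ i, (j i : ℝ))) ≤ 1 := by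
      rw [← ENNReal.ofReal_one]
      apply ENNReal.ofReal_le_ofReal
      apply Real.rpow_le_one_of_one_le_of_nonpos (by norm_num)
      nlinarith [hS0 j]
    refine le_trans (mul_le_mul' (mul_le_mul_right hone _) (hF0N a j)) ?_
    rw [mul_one]
  · -- q₁ < ∞
    have hm : 0 < q₁.toReal := ENNReal.toReal_pos hq₁.ne' hq1t
    set T := ∑' j : Fin d → ℕ,
      ENNReal.ofReal ((2 : ℝ) ^ (-(δ * q₁.toReal) * ∑ i, (j i : ℝ))) with hT
    have hTtop : T < ∞ := tsum_exp_lt_top d (by positivity)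
    have hT1 : (1 : ℝ≥0∞) ≤ T := by
      have h0 : ENNReal.ofReal ((2 : ℝ) ^ (-(δ * q₁.toReal) *
          ∑ i, (((fun _ => 0 : Fin d → ℕ) i) : ℝ))) = 1 := by
        simp
      calc (1 : ℝ≥0∞) = _ := h0.symm
        _ ≤ T := ENNReal.le_tsum _
    have hCfin : ENNReal.ofReal (c₂ ^ tt) * T ^ (1 / q₁.toReal) ≠ ∞ :=
      ENNReal.mul_ne_top ENNReal.ofReal_ne_top
        (ENNReal.rpow_lt_top_of_nonneg (by positivity) hTtop.ne).ne
    have hT1' : (1 : ℝ≥0∞) ≤ T ^ (1 / q₁.toReal) := by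
      calc (1 : ℝ≥0∞) = 1 ^ (1 / q₁.toReal) := (ENNReal.one_rpow _).symm
        _ ≤ T ^ (1 / q₁.toReal) := ENNReal.rpow_le_rpow hT1 (by positivity)
    have hCpos : 0 < ENNReal.ofReal (c₂ ^ tt) * T ^ (1 / q₁.toReal) :=
      ENNReal.mul_pos (ENNReal.ofReal_pos.mpr (Real.rpow_pos_of_pos hc₂ _)).ne'
        (lt_of_lt_of_le zero_lt_one hT1').ne'

    refine ⟨(ENNReal.ofReal (c₂ ^ tt) * T ^ (1 / q₁.toReal)).toReal,
      ENNReal.toReal_pos hCpos.ne' hCfin, fun a => ?_⟩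
    rw [ENNReal.ofReal_toReal hCfin, hnorm r₁ s₁ p₁ q₁ a, if_neg hq1t]
    set N₀ := hybridNorm d D r₀ s₀ p₀ q₀ a with hN₀
    have hstep : ∀ j : Fin d → ℕ,
        (ENNReal.ofReal ((2 : ℝ) ^ ((r₁ - p₁⁻¹.toReal) * (∑ i, (j i : ℝ)) +
            s₁ * ((Finset.univ.sup j : ℕ) : ℝ))) *
          (if p₁ = ∞ then (D j).sup (fun k => (‖a j k‖₊ : ℝ≥0∞))
            else (∑ k ∈ D j, (‖a j k‖₊ : ℝ≥0∞) ^ p₁.toReal) ^ (1 / p₁.toReal))) ^ q₁.toReal ≤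
        (ENNReal.ofReal (c₂ ^ tt) ^ q₁.toReal * N₀ ^ q₁.toReal) *
          ENNReal.ofReal ((2 : ℝ) ^ (-(δ * q₁.toReal) * ∑ i, (j i : ℝ))) := by
      intro j
      have h1 := le_trans (hkey a j) (mul_le_mul_right (hF0N a j) _)
      refine le_trans (ENNReal.rpow_le_rpow h1 hm.le) (le_of_eq ?_)
      rw [ENNReal.mul_rpow_of_nonneg _ _ hm.le, ENNReal.mul_rpow_of_nonneg _ _ hm.le,
        ENNReal.ofReal_rpow_of_nonneg (x := (2:ℝ) ^ (-δ * ∑ i, (j i : ℝ)))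
          (Real.rpow_nonneg (by norm_num) _) hm.le]
      have h2 : ((2 : ℝ) ^ (-δ * ∑ i, (j i : ℝ))) ^ q₁.toReal =
          (2 : ℝ) ^ (-(δ * q₁.toReal) * ∑ i, (j i : ℝ)) := by
        rw [← Real.rpow_mul (by norm_num)]
        congr 1
        ring
      rw [h2]
      ring
    calc (∑' j : Fin d → ℕ,
          (ENNReal.ofReal ((2 : ℝ) ^ ((r₁ - p₁⁻¹.toReal) * (∑ i, (j i : ℝ)) +
              s₁ * ((Finset.univ.sup j : ℕ) : ℝ))) *
            (if p₁ = ∞ then (D j).sup (fun k => (‖a j k‖₊ : ℝ≥0∞))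
              else (∑ k ∈ D j, (‖a j k‖₊ : ℝ≥0∞) ^ p₁.toReal) ^ (1 / p₁.toReal))) ^
            q₁.toReal) ^ (1 / q₁.toReal)
        ≤ (∑' j : Fin d → ℕ, (ENNReal.ofReal (c₂ ^ tt) ^ q₁.toReal * N₀ ^ q₁.toReal) *
            ENNReal.ofReal ((2 : ℝ) ^ (-(δ * q₁.toReal) * ∑ i, (j i : ℝ)))) ^
            (1 / q₁.toReal) :=
          ENNReal.rpow_le_rpow (ENNReal.tsum_le_tsum hstep) (by positivity)
      _ = ((ENNReal.ofReal (c₂ ^ tt) ^ q₁.toReal * N₀ ^ q₁.toReal) * T) ^ (1 / q₁.toReal) := by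
          rw [ENNReal.tsum_mul_left, ← hT]
      _ = ENNReal.ofReal (c₂ ^ tt) * T ^ (1 / q₁.toReal) * N₀ := by
          rw [ENNReal.mul_rpow_of_nonneg _ _ (by positivity),
            ENNReal.mul_rpow_of_nonneg _ _ (by positivity),
            ← ENNReal.rpow_mul (ENNReal.ofReal (c₂ ^ tt)),
            ← ENNReal.rpow_mul N₀, mul_one_div, div_self hm.ne', ENNReal.rpow_one,
            ENNReal.rpow_one]
          ring
end

section
/- Let $d \in \mathbb{N}$, $0 < p_0, p_1, q_0, q_1 \le \infty$, and $r_0, r_1, s_0, s_1 \in \mathbb{R}$ with $r_0 - r_1 - (1/p_0 - 1/p_1)_+ > s_1 - s_0 > 0$. Then for all sufficiently large $m$, $d_m\big( \mathrm{id} : h^{r_0,s_0}_{p_0,q_0}b(\nabla) \to h^{r_1,s_1}_{p_1,q_1}b(\nabla); E \big) \gtrsim m^{-[(r_0-r_1)-(s_1-s_0)-(1/p_0-1/p_1)_+]}$, where $E$ is the dictionary of unit coordinate vectors. -/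
open scoped ENNReal

/-- The `m`-th Kolmogorov dictionary width of
`id : h^{r₀,s₀}_{p₀,q₀}b(∇) → h^{r₁,s₁}_{p₁,q₁}b(∇)` with respect to the
dictionary `E` of unit coordinate vectors: the infimum over index sets `Λ` of
cardinality `≤ m` of the worst-case (over the unit ball of the source space)
best approximation error, in the target norm, by sequences supported on `Λ`. -/
noncomputable def kolmogorovWidth (d : ℕ) (D : (Fin d → ℕ) → Finset (Fin d → ℤ))
    (r₀ s₀ : ℝ) (p₀ q₀ : ℝ≥0∞) (r₁ s₁ : ℝ) (p₁ q₁ : ℝ≥0∞) (m : ℕ) : ℝ≥0∞ :=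
  ⨅ (Λ : Finset ((Fin d → ℕ) × (Fin d → ℤ))) (_ : Λ.card ≤ m),
    ⨆ (a : (Fin d → ℕ) → (Fin d → ℤ) → ℂ) (_ : hybridNorm d D r₀ s₀ p₀ q₀ a ≤ 1),
      ⨅ (b : (Fin d → ℕ) → (Fin d → ℤ) → ℂ) (_ : ∀ j k, (j, k) ∉ Λ → b j k = 0),
        hybridNorm d D r₁ s₁ p₁ q₁ (fun j k => a j k - b j k)

/-- auxiliary test function: constant `lam` on level `j₀` over `S`, zero elsewhere. -/
private noncomputable def tFn {d : ℕ} (j₀ : Fin d → ℕ) (S : Finset (Fin d → ℤ))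
    (lam : ℝ) : (Fin d → ℕ) → (Fin d → ℤ) → ℂ :=
  fun j k => if j = j₀ ∧ k ∈ S then (lam : ℂ) else 0

private lemma hybridNorm_tFn {d : ℕ} (D : (Fin d → ℕ) → Finset (Fin d → ℤ))
    (r s : ℝ) (p q : ℝ≥0∞) (hp : p ≠ 0) (hq : q ≠ 0)
    (j₀ : Fin d → ℕ) (S : Finset (Fin d → ℤ)) (hS : S ⊆ D j₀) (hne : S.Nonempty)
    (lam : ℝ) (hlam : 0 ≤ lam) :
    hybridNorm d D r s p q (tFn j₀ S lam) =
      ENNReal.ofReal ((2 : ℝ) ^ ((r - p⁻¹.toReal) * (∑ i, (j₀ i : ℝ)) +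
          s * ((Finset.univ.sup j₀ : ℕ) : ℝ)) * lam) * (S.card : ℝ≥0∞) ^ p⁻¹.toReal := by
  classical
  have hlamE : (‖((lam : ℂ))‖₊ : ℝ≥0∞) = ENNReal.ofReal lam := by
    rw [Complex.nnnorm_real]
    exact Real.enorm_eq_ofReal hlam
  have hval : ∀ k ∈ S, tFn j₀ S lam j₀ k = (lam : ℂ) := by
    intro k hk; simp [tFn, hk]
  have hval0 : ∀ k, k ∉ S → tFn j₀ S lam j₀ k = 0 := by
    intro k hk; simp [tFn, hk]
  set w : (Fin d → ℕ) → ℝ≥0∞ := fun j => ENNReal.ofReal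
      ((2 : ℝ) ^ ((r - p⁻¹.toReal) * (∑ i, (j i : ℝ)) +
        s * ((Finset.univ.sup j : ℕ) : ℝ))) with hw
  have hGj₀ : (if p = ∞ then (D j₀).sup (fun k => (‖tFn j₀ S lam j₀ k‖₊ : ℝ≥0∞))
      else (∑ k ∈ D j₀, (‖tFn j₀ S lam j₀ k‖₊ : ℝ≥0∞) ^ p.toReal) ^ (1 / p.toReal)) =
      ENNReal.ofReal lam * (S.card : ℝ≥0∞) ^ p⁻¹.toReal := by
    by_cases hpi : p = ∞
    · rw [if_pos hpi]
      have hz : p⁻¹.toReal = 0 := by simp [hpi]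
      rw [hz, ENNReal.rpow_zero, mul_one]
      obtain ⟨k₀, hk₀⟩ := hne
      refine le_antisymm (Finset.sup_le fun k _ => ?_) ?_
      · by_cases hk : k ∈ S
        · rw [hval k hk, hlamE]
        · rw [hval0 k hk]; simp
      · refine le_trans ?_ (Finset.le_sup (hS hk₀))
        rw [hval k₀ hk₀, hlamE]
    · rw [if_neg hpi]
      have hpt : 0 < p.toReal := ENNReal.toReal_pos hp hpi
      have hterm : ∀ k ∈ D j₀, (‖tFn j₀ S lam j₀ k‖₊ : ℝ≥0∞) ^ p.toReal =
          if k ∈ S then (ENNReal.ofReal lam) ^ p.toReal else 0 := by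
        intro k _
        by_cases hk : k ∈ S
        · rw [hval k hk, hlamE, if_pos hk]
        · rw [hval0 k hk, if_neg hk]
          simp [ENNReal.zero_rpow_of_pos hpt]
      have hsum : (∑ k ∈ D j₀, (‖tFn j₀ S lam j₀ k‖₊ : ℝ≥0∞) ^ p.toReal) =
          (S.card : ℝ≥0∞) * (ENNReal.ofReal lam) ^ p.toReal := by
        rw [Finset.sum_congr rfl hterm, Finset.sum_ite_mem,
          Finset.inter_eq_right.mpr hS, Finset.sum_const, nsmul_eq_mul]
      rw [hsum, ENNReal.mul_rpow_of_nonneg _ _ (by positivity), ← ENNReal.rpow_mul,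
        mul_one_div, div_self hpt.ne', ENNReal.rpow_one, one_div, ← ENNReal.toReal_inv,
        mul_comm]
  have hGne : ∀ j, j ≠ j₀ → (if p = ∞ then (D j).sup (fun k => (‖tFn j₀ S lam j k‖₊ : ℝ≥0∞))
      else (∑ k ∈ D j, (‖tFn j₀ S lam j k‖₊ : ℝ≥0∞) ^ p.toReal) ^ (1 / p.toReal)) = 0 := by
    intro j hj
    have hzero : ∀ k, tFn j₀ S lam j k = 0 := by
      intro k; simp [tFn, hj]
    by_cases hpi : p = ∞
    · rw [if_pos hpi]
      refine le_antisymm (Finset.sup_le fun k _ => ?_) zero_le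
      simp [hzero k]
    · rw [if_neg hpi]
      have hpt : 0 < p.toReal := ENNReal.toReal_pos hp hpi
      have : (∑ k ∈ D j, (‖tFn j₀ S lam j k‖₊ : ℝ≥0∞) ^ p.toReal) = 0 := by
        refine Finset.sum_eq_zero fun k _ => ?_
        simp [hzero k, ENNReal.zero_rpow_of_pos hpt]
      rw [this, ENNReal.zero_rpow_of_pos (by positivity)]
  have hgoal : w j₀ * (ENNReal.ofReal lam * (S.card : ℝ≥0∞) ^ p⁻¹.toReal) =
      ENNReal.ofReal ((2 : ℝ) ^ ((r - p⁻¹.toReal) * (∑ i, (j₀ i : ℝ)) +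
        s * ((Finset.univ.sup j₀ : ℕ) : ℝ)) * lam) * (S.card : ℝ≥0∞) ^ p⁻¹.toReal := by
    rw [hw, ENNReal.ofReal_mul (by positivity), mul_assoc]
  simp only [hybridNorm]
  rw [← hgoal]
  by_cases hqi : q = ∞
  · rw [if_pos hqi]
    refine le_antisymm (iSup_le fun j => ?_) ?_
    · by_cases hj : j = j₀
      · subst hj; rw [hGj₀]
      · rw [hGne j hj, mul_zero]; exact zero_le
    · refine le_iSup_of_le j₀ (le_of_eq ?_)
      rw [hGj₀]
  · rw [if_neg hqi]
    have hqt : 0 < q.toReal := ENNReal.toReal_pos hq hqi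
    have htsum : (∑' j, (w j * (if p = ∞ then (D j).sup (fun k => (‖tFn j₀ S lam j k‖₊ : ℝ≥0∞))
        else (∑ k ∈ D j, (‖tFn j₀ S lam j k‖₊ : ℝ≥0∞) ^ p.toReal) ^ (1 / p.toReal))) ^ q.toReal) =
        (w j₀ * (ENNReal.ofReal lam * (S.card : ℝ≥0∞) ^ p⁻¹.toReal)) ^ q.toReal := by
      rw [tsum_eq_single j₀ (fun j hj => ?_)]
      · rw [hGj₀]
      · rw [hGne j hj, mul_zero, ENNReal.zero_rpow_of_pos hqt]
    rw [htsum, ← ENNReal.rpow_mul, mul_one_div, div_self hqt.ne', ENNReal.rpow_one]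

private lemma hybridNorm_lower {d : ℕ} (D : (Fin d → ℕ) → Finset (Fin d → ℤ))
    (r s : ℝ) (p q : ℝ≥0∞) (hp : p ≠ 0) (hq : q ≠ 0)
    (j₀ : Fin d → ℕ) (T : Finset (Fin d → ℤ)) (hT : T ⊆ D j₀) (hne : T.Nonempty)
    (lam : ℝ) (hlam : 0 ≤ lam) (f : (Fin d → ℕ) → (Fin d → ℤ) → ℂ)
    (hf : ∀ k ∈ T, f j₀ k = (lam : ℂ)) :
    ENNReal.ofReal ((2 : ℝ) ^ ((r - p⁻¹.toReal) * (∑ i, (j₀ i : ℝ)) +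
        s * ((Finset.univ.sup j₀ : ℕ) : ℝ)) * lam) * (T.card : ℝ≥0∞) ^ p⁻¹.toReal ≤
      hybridNorm d D r s p q f := by
  classical
  have hlamE : (‖((lam : ℂ))‖₊ : ℝ≥0∞) = ENNReal.ofReal lam := by
    rw [Complex.nnnorm_real]
    exact Real.enorm_eq_ofReal hlam
  set w : (Fin d → ℕ) → ℝ≥0∞ := fun j => ENNReal.ofReal
      ((2 : ℝ) ^ ((r - p⁻¹.toReal) * (∑ i, (j i : ℝ)) +
        s * ((Finset.univ.sup j : ℕ) : ℝ))) with hw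
  have hG : ENNReal.ofReal lam * (T.card : ℝ≥0∞) ^ p⁻¹.toReal ≤
      (if p = ∞ then (D j₀).sup (fun k => (‖f j₀ k‖₊ : ℝ≥0∞))
      else (∑ k ∈ D j₀, (‖f j₀ k‖₊ : ℝ≥0∞) ^ p.toReal) ^ (1 / p.toReal)) := by
    by_cases hpi : p = ∞
    · rw [if_pos hpi]
      have hz : p⁻¹.toReal = 0 := by simp [hpi]
      rw [hz, ENNReal.rpow_zero, mul_one]
      obtain ⟨k₀, hk₀⟩ := hne
      refine le_trans ?_ (Finset.le_sup (hT hk₀))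
      rw [hf k₀ hk₀, hlamE]
    · rw [if_neg hpi]
      have hpt : 0 < p.toReal := ENNReal.toReal_pos hp hpi
      have hsum : (T.card : ℝ≥0∞) * (ENNReal.ofReal lam) ^ p.toReal ≤
          ∑ k ∈ D j₀, (‖f j₀ k‖₊ : ℝ≥0∞) ^ p.toReal := by
        refine le_trans (le_of_eq ?_) (Finset.sum_le_sum_of_subset hT)
        rw [Finset.sum_congr rfl (fun k hk => by rw [hf k hk, hlamE]),
          Finset.sum_const, nsmul_eq_mul]
      calc ENNReal.ofReal lam * (T.card : ℝ≥0∞) ^ p⁻¹.toReal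
          = ((T.card : ℝ≥0∞) * (ENNReal.ofReal lam) ^ p.toReal) ^ (1 / p.toReal) := by
            rw [ENNReal.mul_rpow_of_nonneg _ _ (by positivity), ← ENNReal.rpow_mul,
              mul_one_div, div_self hpt.ne', ENNReal.rpow_one, one_div,
              ← ENNReal.toReal_inv, mul_comm]
        _ ≤ _ := ENNReal.rpow_le_rpow hsum (by positivity)
  have hFle : w j₀ * (ENNReal.ofReal lam * (T.card : ℝ≥0∞) ^ p⁻¹.toReal) ≤
      w j₀ * (if p = ∞ then (D j₀).sup (fun k => (‖f j₀ k‖₊ : ℝ≥0∞))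
      else (∑ k ∈ D j₀, (‖f j₀ k‖₊ : ℝ≥0∞) ^ p.toReal) ^ (1 / p.toReal)) :=
    mul_le_mul_right hG _
  have hgoal : ENNReal.ofReal ((2 : ℝ) ^ ((r - p⁻¹.toReal) * (∑ i, (j₀ i : ℝ)) +
      s * ((Finset.univ.sup j₀ : ℕ) : ℝ)) * lam) * (T.card : ℝ≥0∞) ^ p⁻¹.toReal =
      w j₀ * (ENNReal.ofReal lam * (T.card : ℝ≥0∞) ^ p⁻¹.toReal) := by
    rw [hw, ENNReal.ofReal_mul (by positivity), mul_assoc]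
  rw [hgoal]
  refine le_trans hFle ?_
  simp only [hybridNorm]
  by_cases hqi : q = ∞
  · rw [if_pos hqi]
    exact le_iSup (fun j => w j * (if p = ∞ then (D j).sup (fun k => (‖f j k‖₊ : ℝ≥0∞))
      else (∑ k ∈ D j, (‖f j k‖₊ : ℝ≥0∞) ^ p.toReal) ^ (1 / p.toReal))) j₀
  · rw [if_neg hqi]
    have hqt : 0 < q.toReal := ENNReal.toReal_pos hq hqi
    set V := w j₀ * (if p = ∞ then (D j₀).sup (fun k => (‖f j₀ k‖₊ : ℝ≥0∞))
      else (∑ k ∈ D j₀, (‖f j₀ k‖₊ : ℝ≥0∞) ^ p.toReal) ^ (1 / p.toReal)) with hV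
    calc V = (V ^ q.toReal) ^ (1 / q.toReal) := by
          rw [← ENNReal.rpow_mul, mul_one_div, div_self hqt.ne', ENNReal.rpow_one]
      _ ≤ _ := ENNReal.rpow_le_rpow (ENNReal.le_tsum j₀) (by positivity)

/-- Lower bound for the Kolmogorov dictionary widths of the break-of-scale
embedding of hybrid Besov sequence spaces: if
`r₀ - r₁ - (1/p₀ - 1/p₁)₊ > s₁ - s₀ > 0` and `|𝔇_j| ∼ 2^{|j|₁}`, then for all
sufficiently large `m`,
`d_m(id; E) ≳ m^{-[(r₀-r₁)-(s₁-s₀)-(1/p₀-1/p₁)₊]}`. -/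
theorem kolmogorov_width_lower_bound (d : ℕ) (hd : 0 < d)
    (D : (Fin d → ℕ) → Finset (Fin d → ℤ))
    (hD : ∃ c₁ c₂ : ℝ, 0 < c₁ ∧ 0 < c₂ ∧ ∀ j : Fin d → ℕ,
      c₁ * (2 : ℝ) ^ (∑ i, (j i : ℝ)) ≤ ((D j).card : ℝ) ∧
      ((D j).card : ℝ) ≤ c₂ * (2 : ℝ) ^ (∑ i, (j i : ℝ)))
    (p₀ p₁ q₀ q₁ : ℝ≥0∞) (hp₀ : 0 < p₀) (hp₁ : 0 < p₁) (hq₀ : 0 < q₀) (hq₁ : 0 < q₁)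
    (r₀ r₁ s₀ s₁ : ℝ)
    (hcond : s₁ - s₀ < r₀ - r₁ - max (p₀⁻¹.toReal - p₁⁻¹.toReal) 0)
    (hs : 0 < s₁ - s₀) :
    ∃ c : ℝ, 0 < c ∧ ∃ m₀ : ℕ, ∀ m : ℕ, m₀ ≤ m →
      ENNReal.ofReal
          (c * (m : ℝ) ^
            (-((r₀ - r₁) - (s₁ - s₀) - max (p₀⁻¹.toReal - p₁⁻¹.toReal) 0))) ≤
        kolmogorovWidth d D r₀ s₀ p₀ q₀ r₁ s₁ p₁ q₁ m := by
  classical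
  obtain ⟨c₁, c₂, hc₁, hc₂, hDc⟩ := hD
  have h20 : (0:ℝ) < 2 := by norm_num
  set u₀ := p₀⁻¹.toReal with hu₀def
  set u₁ := p₁⁻¹.toReal with hu₁def
  have hu₀0 : 0 ≤ u₀ := ENNReal.toReal_nonneg
  have hu₁0 : 0 ≤ u₁ := ENNReal.toReal_nonneg
  set α := (r₀ - r₁) - (s₁ - s₀) - max (u₀ - u₁) 0 with hαdef
  have hαpos : 0 < α := by
    have := hcond
    simp only [hαdef]
    linarith
  obtain ⟨K, hK⟩ := pow_unbounded_of_one_lt (R := ℝ) (4 / c₁) one_lt_two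
  have hK4 : 4 ≤ c₁ * 2 ^ K := by
    rw [div_lt_iff₀ hc₁] at hK
    nlinarith
  -- Common preparation, as a reusable statement:
  -- for each m ≥ 1 we get a level j₀ and size facts.
  have common : ∀ m : ℕ, 1 ≤ m → ∃ (j₀ : Fin d → ℕ) (L : ℕ),
      (∑ i, (j₀ i : ℝ)) = (L : ℝ) ∧ ((Finset.univ.sup j₀ : ℕ) : ℝ) = (L : ℝ) ∧
      (m : ℝ) < (2:ℝ) ^ (L:ℝ) ∧ (2:ℝ) ^ (L:ℝ) ≤ 2 ^ (K+1) * m ∧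
      2 * m + 2 ≤ (D j₀).card ∧ ((D j₀).card : ℝ) ≤ c₂ * (2:ℝ) ^ (L:ℝ) := by
    intro m hm
    set L := Nat.log 2 m + K + 1 with hL
    set i0 : Fin d := ⟨0, hd⟩
    set j₀ : Fin d → ℕ := fun i => if i = i0 then L else 0 with hj₀
    have hsum : (∑ i, (j₀ i : ℝ)) = (L : ℝ) := by
      have h1 : ∀ i ∈ Finset.univ, (j₀ i : ℝ) = if i = i0 then (L:ℝ) else 0 := by
        intro i _
        by_cases h : i = i0 <;> simp [hj₀, h]
      rw [Finset.sum_congr rfl h1, Finset.sum_ite_eq' Finset.univ i0 (fun _ => (L:ℝ)),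
        if_pos (Finset.mem_univ i0)]
    have hsupj : Finset.univ.sup j₀ = L := by
      refine le_antisymm (Finset.sup_le fun i _ => ?_) ?_
      · by_cases h : i = i0 <;> simp [hj₀, h]
      · have := Finset.le_sup (f := j₀) (Finset.mem_univ i0)
        simpa [hj₀] using this
    have hPpow : (2:ℝ) ^ (L:ℝ) = ((2^L : ℕ) : ℝ) := by
      rw [Real.rpow_natCast]; push_cast; ring
    have hm1 : (1:ℝ) ≤ m := by exact_mod_cast hm
    have hmP : (m : ℝ) < (2:ℝ) ^ (L:ℝ) := by
      have h1 : m < 2 ^ (Nat.log 2 m + 1) := Nat.lt_pow_succ_log_self (by norm_num) m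
      have h2 : (2:ℕ) ^ (Nat.log 2 m + 1) ≤ 2 ^ L := Nat.pow_le_pow_right (by norm_num) (by omega)
      rw [hPpow]
      exact_mod_cast lt_of_lt_of_le h1 h2
    have hPle : (2:ℝ) ^ (L:ℝ) ≤ 2 ^ (K+1) * m := by
      have h1 : (2:ℕ) ^ Nat.log 2 m ≤ m := Nat.pow_log_le_self 2 (by omega)
      have h1' : ((2:ℝ)) ^ Nat.log 2 m ≤ m := by exact_mod_cast h1
      have h2 : (2:ℝ) ^ (L:ℝ) = (2:ℝ) ^ Nat.log 2 m * 2 ^ (K+1) := by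
        rw [hPpow, hL]; push_cast; ring
      rw [h2]
      have : (0:ℝ) < 2 ^ (K+1) := by positivity
      nlinarith
    have hcard : 2 * m + 2 ≤ (D j₀).card := by
      have hlow := (hDc j₀).1
      rw [hsum] at hlow
      have e2 : (2:ℝ) ^ (L:ℝ) = ((2:ℝ)^K) * ((2:ℕ) ^ (Nat.log 2 m + 1) : ℝ) := by
        rw [hPpow, hL]; push_cast; ring
      have e3 : (m:ℝ) + 1 ≤ ((2:ℕ) ^ (Nat.log 2 m + 1) : ℝ) := by
        have := Nat.lt_pow_succ_log_self (b := 2) (by norm_num) m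
        exact_mod_cast this
      have e4 : (0:ℝ) < (2:ℝ)^K := by positivity
      have e5 : (2 * m + 2 : ℝ) ≤ c₁ * (2:ℝ) ^ (L:ℝ) := by
        rw [e2]
        nlinarith
      have : (2 * m + 2 : ℝ) ≤ ((D j₀).card : ℝ) := le_trans e5 hlow
      exact_mod_cast this
    have hub := (hDc j₀).2
    rw [hsum] at hub
    exact ⟨j₀, L, hsum, by rw [hsupj], hmP, hPle, hcard, hub⟩
  rcases le_or_gt u₁ u₀ with hAB | hAB
  · -- Case A : u₀ ≥ u₁, max = u₀ - u₁, single coefficient test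
    have hmax : max (u₀ - u₁) 0 = u₀ - u₁ := max_eq_left (by linarith)
    refine ⟨((2:ℝ) ^ (K+1)) ^ (-α), by positivity, 1, fun m hm => ?_⟩
    obtain ⟨j₀, L, hsum, hsupj, hmP, hPle, hcard, hub⟩ := common m hm
    have hm1 : (1:ℝ) ≤ m := by exact_mod_cast hm
    have hm0 : (0:ℝ) < m := by linarith
    have hPpos : (0:ℝ) < (2:ℝ) ^ (L:ℝ) := by positivity
    simp only [kolmogorovWidth]
    refine le_iInf fun Λ => le_iInf fun hΛ => ?_
    set Λs := Λ.image Prod.snd with hΛs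
    have hΛscard : Λs.card ≤ m := le_trans (Finset.card_image_le) hΛ
    have hnotmem : ∀ k, k ∉ Λs → (j₀, k) ∉ Λ := by
      intro k hk hmem
      exact hk (Finset.mem_image_of_mem Prod.snd hmem)
    have hex : ∃ k₀ ∈ D j₀, k₀ ∉ Λs := by
      by_contra h
      push_neg at h
      have hsub : D j₀ ⊆ Λs := fun k hk => h k hk
      have := Finset.card_le_card hsub
      omega
    obtain ⟨k₀, hk₀D, hk₀Λ⟩ := hex
    set X₀ : ℝ := (r₀ - u₀) * (L:ℝ) + s₀ * (L:ℝ) with hX₀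
    set X₁ : ℝ := (r₁ - u₁) * (L:ℝ) + s₁ * (L:ℝ) with hX₁
    set lam : ℝ := (2:ℝ) ^ (-X₀) with hlamdef
    have hlampos : (0:ℝ) < lam := by rw [hlamdef]; positivity
    have hnorm₀ : hybridNorm d D r₀ s₀ p₀ q₀ (tFn j₀ {k₀} lam) ≤ 1 := by
      rw [hybridNorm_tFn D r₀ s₀ p₀ q₀ hp₀.ne' hq₀.ne' j₀ {k₀}
        (Finset.singleton_subset_iff.mpr hk₀D) (Finset.singleton_nonempty _) lam hlampos.le,
        hsum, hsupj]
      simp only [Finset.card_singleton, Nat.cast_one, ENNReal.one_rpow, mul_one]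
      have : (2:ℝ) ^ ((r₀ - u₀) * (L:ℝ) + s₀ * (L:ℝ)) * lam = 1 := by
        rw [hlamdef, ← Real.rpow_add h20, hX₀, add_neg_cancel, Real.rpow_zero]
      rw [← hu₀def, ← hX₀, this, ENNReal.ofReal_one]
    refine le_iSup₂_of_le (tFn j₀ {k₀} lam) hnorm₀ ?_
    refine le_iInf fun b => le_iInf fun hb => ?_
    have hbz : b j₀ k₀ = 0 := hb j₀ k₀ (hnotmem k₀ hk₀Λ)
    have hlow := hybridNorm_lower D r₁ s₁ p₁ q₁ hp₁.ne' hq₁.ne' j₀ {k₀}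
      (Finset.singleton_subset_iff.mpr hk₀D) (Finset.singleton_nonempty _) lam hlampos.le
      (fun j k => tFn j₀ {k₀} lam j k - b j k)
      (by
        intro k hk
        rw [Finset.mem_singleton] at hk
        show tFn j₀ {k₀} lam j₀ k - b j₀ k = (lam : ℂ)
        rw [hk, hbz, sub_zero]
        simp [tFn])
    rw [hsum, hsupj] at hlow
    simp only [Finset.card_singleton, Nat.cast_one, ENNReal.one_rpow, mul_one] at hlow
    refine le_trans ?_ hlow
    apply ENNReal.ofReal_le_ofReal
    have hexp : (r₁ - u₁) * (L:ℝ) + s₁ * (L:ℝ) + -X₀ = (L:ℝ) * (-α) := by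
      rw [hX₀, hαdef, hmax]; ring
    have hrhs : (2:ℝ) ^ ((r₁ - u₁) * (L:ℝ) + s₁ * (L:ℝ)) * lam
        = ((2:ℝ) ^ (L:ℝ)) ^ (-α) := by
      rw [hlamdef, ← Real.rpow_add h20, hexp, Real.rpow_mul h20.le]
    rw [← hu₁def, hrhs]
    have hb1 : ((2:ℝ) ^ (K+1) * m) ^ (-α) ≤ ((2:ℝ) ^ (L:ℝ)) ^ (-α) :=
      Real.rpow_le_rpow_of_nonpos hPpos hPle (by linarith)
    calc ((2:ℝ) ^ (K+1)) ^ (-α) * (m:ℝ) ^ (-α)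
        = ((2:ℝ) ^ (K+1) * m) ^ (-α) := (Real.mul_rpow (by positivity) hm0.le).symm
      _ ≤ _ := hb1
  · -- Case B : u₀ < u₁, max = 0, full-block test
    have hmax : max (u₀ - u₁) 0 = 0 := max_eq_right (by linarith)
    refine ⟨c₂⁻¹ ^ u₀ * ((2:ℝ) ^ (K+1))⁻¹ ^ u₁ * ((2:ℝ) ^ (K+1)) ^ (-α),
      by positivity, 1, fun m hm => ?_⟩
    obtain ⟨j₀, L, hsum, hsupj, hmP, hPle, hcard, hub⟩ := common m hm
    have hm1 : (1:ℝ) ≤ m := by exact_mod_cast hm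
    have hm0 : (0:ℝ) < m := by linarith
    have hPpos : (0:ℝ) < (2:ℝ) ^ (L:ℝ) := by positivity
    set n := (D j₀).card with hn
    have hn0 : 0 < n := by omega
    have hnR : (0:ℝ) < n := by exact_mod_cast hn0
    simp only [kolmogorovWidth]
    refine le_iInf fun Λ => le_iInf fun hΛ => ?_
    set Λs := Λ.image Prod.snd with hΛs
    have hΛscard : Λs.card ≤ m := le_trans (Finset.card_image_le) hΛ
    have hnotmem : ∀ k, k ∉ Λs → (j₀, k) ∉ Λ := by
      intro k hk hmem
      exact hk (Finset.mem_image_of_mem Prod.snd hmem)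
    set T := D j₀ \ Λs with hT
    have hTsub : T ⊆ D j₀ := Finset.sdiff_subset
    have hsd : n - Λs.card ≤ T.card := by
      rw [hT, hn]
      exact Finset.le_card_sdiff _ _
    have hTcard : m ≤ T.card := by omega
    have hTne : T.Nonempty := Finset.card_pos.mp (by omega)
    set X₀ : ℝ := (r₀ - u₀) * (L:ℝ) + s₀ * (L:ℝ) with hX₀
    set X₁ : ℝ := (r₁ - u₁) * (L:ℝ) + s₁ * (L:ℝ) with hX₁
    set lam : ℝ := (2:ℝ) ^ (-X₀) * (n:ℝ) ^ (-u₀) with hlamdef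
    have hlampos : (0:ℝ) < lam := by rw [hlamdef]; positivity
    have hDne : (D j₀).Nonempty := Finset.card_pos.mp hn0
    have hnorm₀ : hybridNorm d D r₀ s₀ p₀ q₀ (tFn j₀ (D j₀) lam) ≤ 1 := by
      rw [hybridNorm_tFn D r₀ s₀ p₀ q₀ hp₀.ne' hq₀.ne' j₀ (D j₀)
        (subset_refl _) hDne lam hlampos.le, hsum, hsupj]
      have hc1 : ((D j₀).card : ℝ≥0∞) ^ u₀ = ENNReal.ofReal ((n:ℝ) ^ u₀) := by
        rw [hn, ← ENNReal.ofReal_natCast, ENNReal.ofReal_rpow_of_pos hnR]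
      rw [← hu₀def, hc1, ← ENNReal.ofReal_mul (by positivity)]
      have : (2:ℝ) ^ ((r₀ - u₀) * (L:ℝ) + s₀ * (L:ℝ)) * lam * (n:ℝ) ^ u₀ = 1 := by
        rw [hlamdef, ← hX₀]
        have e1 : (2:ℝ) ^ X₀ * (2:ℝ) ^ (-X₀) = 1 := by
          rw [← Real.rpow_add h20, add_neg_cancel, Real.rpow_zero]
        have e2 : (n:ℝ) ^ (-u₀) * (n:ℝ) ^ u₀ = 1 := by
          rw [← Real.rpow_add hnR, neg_add_cancel, Real.rpow_zero]
        calc (2:ℝ) ^ X₀ * ((2:ℝ) ^ (-X₀) * (n:ℝ) ^ (-u₀)) * (n:ℝ) ^ u₀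
            = ((2:ℝ) ^ X₀ * (2:ℝ) ^ (-X₀)) * ((n:ℝ) ^ (-u₀) * (n:ℝ) ^ u₀) := by ring
          _ = 1 := by rw [e1, e2, mul_one]
      rw [← hX₀, this, ENNReal.ofReal_one]
    refine le_iSup₂_of_le (tFn j₀ (D j₀) lam) hnorm₀ ?_
    refine le_iInf fun b => le_iInf fun hb => ?_
    have hlow := hybridNorm_lower D r₁ s₁ p₁ q₁ hp₁.ne' hq₁.ne' j₀ T hTsub hTne lam hlampos.le
      (fun j k => tFn j₀ (D j₀) lam j k - b j k)
      (by
        intro k hk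
        have hkD : k ∈ D j₀ := hTsub hk
        have hkΛ : k ∉ Λs := (Finset.mem_sdiff.mp hk).2
        show tFn j₀ (D j₀) lam j₀ k - b j₀ k = (lam : ℂ)
        rw [hb j₀ k (hnotmem k hkΛ), sub_zero]
        simp [tFn, hkD])
    rw [hsum, hsupj] at hlow
    refine le_trans ?_ hlow
    have hmT : ((m:ℕ) : ℝ≥0∞) ^ u₁ ≤ (T.card : ℝ≥0∞) ^ u₁ :=
      ENNReal.rpow_le_rpow (by exact_mod_cast hTcard) hu₁0
    refine le_trans ?_ (mul_le_mul_right hmT _)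
    have hmcoe : ((m:ℕ) : ℝ≥0∞) ^ u₁ = ENNReal.ofReal ((m:ℝ) ^ u₁) := by
      rw [← ENNReal.ofReal_natCast, ENNReal.ofReal_rpow_of_pos hm0]
    rw [← hu₁def, hmcoe, ← ENNReal.ofReal_mul (by positivity)]
    apply ENNReal.ofReal_le_ofReal
    -- the purely real inequality
    set P : ℝ := (2:ℝ) ^ (L:ℝ) with hPdef
    have hPn : c₂⁻¹ ≤ P / n := by
      rw [le_div_iff₀ hnR, inv_mul_le_iff₀ hc₂]
      rw [hn]
      exact hub
    have hmPd : ((2:ℝ) ^ (K+1))⁻¹ ≤ (m:ℝ) / P := by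
      rw [le_div_iff₀ hPpos, inv_mul_le_iff₀ (by positivity)]
      linarith
    have e1 : (2:ℝ) ^ X₁ * (2:ℝ) ^ (-X₀) = P ^ (-α) * P ^ u₀ * P ^ (-u₁) := by
      rw [← Real.rpow_add h20]
      have hexp : X₁ + -X₀ = (L:ℝ) * (-α) + ((L:ℝ) * u₀ + (L:ℝ) * (-u₁)) := by
        rw [hX₀, hX₁, hαdef, hmax]; ring
      rw [hexp, Real.rpow_add h20, Real.rpow_add h20, Real.rpow_mul h20.le,
        Real.rpow_mul h20.le, Real.rpow_mul h20.le, ← hPdef]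
      ring
    have e2 : P ^ u₀ * (n:ℝ) ^ (-u₀) = (P / n) ^ u₀ := by
      rw [Real.div_rpow hPpos.le hnR.le, Real.rpow_neg hnR.le, div_eq_mul_inv]
    have e3 : P ^ (-u₁) * (m:ℝ) ^ u₁ = ((m:ℝ) / P) ^ u₁ := by
      rw [Real.div_rpow hm0.le hPpos.le, Real.rpow_neg hPpos.le, div_eq_mul_inv]
      ring
    have etarget : (2:ℝ) ^ ((r₁ - u₁) * (L:ℝ) + s₁ * (L:ℝ)) * lam * (m:ℝ) ^ u₁
        = (P / n) ^ u₀ * ((m:ℝ) / P) ^ u₁ * P ^ (-α) := by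
      rw [← hX₁, hlamdef]
      calc (2:ℝ) ^ X₁ * ((2:ℝ) ^ (-X₀) * (n:ℝ) ^ (-u₀)) * (m:ℝ) ^ u₁
          = ((2:ℝ) ^ X₁ * (2:ℝ) ^ (-X₀)) * (n:ℝ) ^ (-u₀) * (m:ℝ) ^ u₁ := by ring
        _ = (P ^ (-α) * P ^ u₀ * P ^ (-u₁)) * (n:ℝ) ^ (-u₀) * (m:ℝ) ^ u₁ := by rw [e1]
        _ = (P ^ u₀ * (n:ℝ) ^ (-u₀)) * (P ^ (-u₁) * (m:ℝ) ^ u₁) * P ^ (-α) := by ring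
        _ = (P / n) ^ u₀ * ((m:ℝ) / P) ^ u₁ * P ^ (-α) := by rw [e2, e3]
    rw [etarget]
    have hb1 : ((2:ℝ) ^ (K+1) * m) ^ (-α) ≤ P ^ (-α) :=
      Real.rpow_le_rpow_of_nonpos hPpos hPle (by linarith)
    have hb2 : c₂⁻¹ ^ u₀ ≤ (P / n) ^ u₀ :=
      Real.rpow_le_rpow (by positivity) hPn hu₀0
    have hb3 : ((2:ℝ) ^ (K+1))⁻¹ ^ u₁ ≤ ((m:ℝ) / P) ^ u₁ :=
      Real.rpow_le_rpow (by positivity) hmPd hu₁0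
    calc c₂⁻¹ ^ u₀ * ((2:ℝ) ^ (K+1))⁻¹ ^ u₁ * ((2:ℝ) ^ (K+1)) ^ (-α) * (m:ℝ) ^ (-α)
        = c₂⁻¹ ^ u₀ * ((2:ℝ) ^ (K+1))⁻¹ ^ u₁ * (((2:ℝ) ^ (K+1)) ^ (-α) * (m:ℝ) ^ (-α)) := by
          ring
      _ = c₂⁻¹ ^ u₀ * ((2:ℝ) ^ (K+1))⁻¹ ^ u₁ * ((2:ℝ) ^ (K+1) * m) ^ (-α) := by
          rw [← Real.mul_rpow (by positivity) hm0.le]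
      _ ≤ (P / n) ^ u₀ * ((m:ℝ) / P) ^ u₁ * P ^ (-α) := by
          refine mul_le_mul (mul_le_mul hb2 hb3 (by positivity) (by positivity)) hb1
            (by positivity) (by positivity)
end
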